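/- arXiv:1907.07886 — 5 statements merged into one kernel-verified Lean document; each statement's English description precedes it below -/
import Mathlib

section
/- For every m ≥ 1 and d ≥ 1 there exists a full-row-rank matrix A ∈ ℤ^{m×(m+d)} with φ^max(A) = d and σ^asy(A) = m + d; concretely, with distinct primes p_1 < … < p_d, δ := p_1⋯p_d, q_i := δ/p_i, and Ã := (q_1, …, q_d, −δ) ∈ ℤ^{1×(d+1)}, the block matrix A with the (m−1)×(m−1) identity in the upper-left block, Ã in the lower-right block, and zeros elsewhere satisfies: (a) φ^max(A) = d; (b) for k = m + d, the ratio |{b ∈ {−t,…,t}^m : σ(A,b) ≤ k}| / |{b ∈ {−t,…,t}^m : P(A,b) ≠ ∅}| tends to 1 as t → ∞; and (c) for k = m + d − 1 this ratio does not tend to 1. -/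
/-- Ω(k): number of prime factors of `k` counted with multiplicity (`Ω 1 = 0`). -/
noncomputable def bigOmega (k : ℕ) : ℕ := k.primeFactorsList.length

/-- The cone generated by the columns of an integer matrix `W`, as a subset of `ℝ^m`. -/
def coneOf {m r : ℕ} (W : Matrix (Fin m) (Fin r) ℤ) : Set (Fin m → ℝ) :=
  {y | ∃ c : Fin r → ℝ, (∀ j, 0 ≤ c j) ∧ y = ∑ j, c j • fun i => (W i j : ℝ)}

/-- φ^max(W): the maximum of Ω(|det W'|) over invertible m×m submatrices W' of W. -/
noncomputable def phiMax {m r : ℕ} (W : Matrix (Fin m) (Fin r) ℤ) : ℕ :=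
  sSup {t : ℕ | ∃ g : Fin m → Fin r, Function.Injective g ∧
    (W.submatrix id g).det ≠ 0 ∧ t = bigOmega (W.submatrix id g).det.natAbs}

/-- σ(A,b) ∈ ℕ∞: the minimal support size of a nonnegative integer solution of `A x = b`,
`⊤` if no solution exists. -/
noncomputable def sigmaFn {m n : ℕ} (A : Matrix (Fin m) (Fin n) ℤ) (b : Fin m → ℤ) : ℕ∞ :=
  sInf {k : ℕ∞ | ∃ x : Fin n → ℤ, (∀ j, 0 ≤ x j) ∧ A.mulVec x = b ∧
    (Set.ncard {j | x j ≠ 0} : ℕ∞) = k}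

/-- The fraction of right-hand sides `b ∈ {-t,…,t}^m` admitting a feasible solution with
support of size at most `k`, among feasible right-hand sides. -/
noncomputable def sparseRatio {m n : ℕ} (A : Matrix (Fin m) (Fin n) ℤ) (k : ℕ) (t : ℕ) : ℝ :=
  (Set.ncard {b : Fin m → ℤ | (∀ i, |b i| ≤ (t : ℤ)) ∧ sigmaFn A b ≤ (k : ℕ∞)} : ℝ) /
  (Set.ncard {b : Fin m → ℤ | (∀ i, |b i| ≤ (t : ℤ)) ∧
      ∃ x : Fin n → ℤ, (∀ j, 0 ≤ x j) ∧ A.mulVec x = b} : ℝ)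


/-- σ^asy(A): the least `k` such that almost all feasible right-hand sides in `{-t,…,t}^m`
admit a solution with support of size at most `k`. -/
noncomputable def sigmaAsy {m n : ℕ} (A : Matrix (Fin m) (Fin n) ℤ) : ℕ :=
  sInf {k : ℕ | Filter.Tendsto (sparseRatio A k) Filter.atTop (nhds 1)}




lemma bigOmega_mul {a b : ℕ} (ha : a ≠ 0) (hb : b ≠ 0) :
    bigOmega (a * b) = bigOmega a + bigOmega b := by
  have := (Nat.perm_primeFactorsList_mul ha hb).length_eq
  simpa [bigOmega] using this

lemma bigOmega_le_of_dvd {a b : ℕ} (h : a ∣ b) (hb : b ≠ 0) : bigOmega a ≤ bigOmega b := by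
  obtain ⟨c, rfl⟩ := h
  have ha : a ≠ 0 := by rintro rfl; simp at hb
  have hc : c ≠ 0 := by rintro rfl; simp at hb
  rw [bigOmega_mul ha hc]; omega

lemma bigOmega_prod_primes (S : Finset ℕ) (hS : ∀ p ∈ S, p.Prime) :
    bigOmega (∏ p ∈ S, p) = S.card := by
  induction S using Finset.cons_induction with
  | empty => simp [bigOmega]
  | cons a S ha ih =>
    rw [Finset.prod_cons, Finset.card_cons,
      bigOmega_mul (hS a (Finset.mem_cons_self a S)).ne_zero
        (Finset.prod_ne_zero_iff.mpr fun p hp => (hS p (Finset.mem_cons_of_mem hp)).ne_zero)]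
    have : bigOmega a = 1 := by
      simp [bigOmega, Nat.primeFactorsList_prime (hS a (Finset.mem_cons_self a S))]
    rw [this, ih (fun p hp => hS p (Finset.mem_cons_of_mem hp))]
    omega

lemma bezout_primes (S : Finset ℕ) (hS : ∀ p ∈ S, p.Prime) (hne : S.Nonempty) :
    ∃ u : ℕ → ℤ, ∑ p ∈ S, u p * ∏ q ∈ S.erase p, (q : ℤ) = 1 := by
  induction hne using Finset.Nonempty.cons_induction with
  | singleton a => exact ⟨fun _ => 1, by simp⟩
  | cons a S ha hne ih =>
    obtain ⟨u, hu⟩ := ih (fun p hp => hS p (Finset.mem_cons_of_mem hp))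
    have hap : (a : ℕ).Prime := hS a (Finset.mem_cons_self a S)
    have hcop : Nat.Coprime a (∏ q ∈ S, q) := by
      apply Nat.Coprime.prod_right
      intro q hq
      exact (Nat.coprime_primes hap (hS q (Finset.mem_cons_of_mem hq))).mpr
        (by rintro rfl; exact ha hq)
    have : IsCoprime (a : ℤ) ((∏ q ∈ S, q : ℕ) : ℤ) := by
      rw [Nat.isCoprime_iff_coprime]; exact hcop
    obtain ⟨x, y, hxy⟩ := this
    refine ⟨fun p => if p = a then y else x * u p, ?_⟩
    rw [Finset.sum_cons]
    have h1 : (Finset.cons a S ha).erase a = S := by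
      rw [Finset.erase_cons]
    have h2 : ∀ p ∈ S, (Finset.cons a S ha).erase p = Finset.cons a (S.erase p)
        (by simp [ha, Finset.mem_erase]) := by
      intro p hp
      ext q
      simp only [Finset.mem_erase, Finset.mem_cons]
      constructor
      · rintro ⟨hq, (rfl | hq')⟩
        · exact Or.inl rfl
        · exact Or.inr ⟨hq, hq'⟩
      · rintro (rfl | ⟨hq, hq'⟩)
        · exact ⟨by rintro rfl; exact ha hp, Or.inl rfl⟩
        · exact ⟨hq, Or.inr hq'⟩
    rw [h1]
    dsimp only
    rw [if_pos rfl]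
    have h3 : ∑ p ∈ S, (if p = a then y else x * u p) * ∏ q ∈ (Finset.cons a S ha).erase p, (q:ℤ)
        = ∑ p ∈ S, (x * u p) * ((a:ℤ) * ∏ q ∈ S.erase p, (q:ℤ)) := by
      apply Finset.sum_congr rfl
      intro p hp
      rw [if_neg (by rintro rfl; exact ha hp), h2 p hp]
      push_cast [Finset.prod_cons]
      ring
    rw [h3]
    have h4 : ∑ p ∈ S, (x * u p) * ((a:ℤ) * ∏ q ∈ S.erase p, (q:ℤ))
        = (x * a) * ∑ p ∈ S, u p * ∏ q ∈ S.erase p, (q:ℤ) := by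
      rw [Finset.mul_sum]; apply Finset.sum_congr rfl; intros; ring
    rw [h4, hu]
    push_cast at hxy ⊢
    linarith

lemma bezout_primes_family {ι : Type*} [DecidableEq ι] {P : ι → ℕ} (T : Finset ι)
    (hS : ∀ i ∈ T, (P i).Prime) (hinjT : Set.InjOn P T) (hne : T.Nonempty) :
    ∃ u : ι → ℤ, ∑ i ∈ T, u i * ∏ j ∈ T.erase i, (P j : ℤ) = 1 := by
  induction hne using Finset.Nonempty.cons_induction with
  | singleton a => exact ⟨fun _ => 1, by simp⟩
  | cons a S ha hne ih =>
    obtain ⟨u, hu⟩ := ih (fun p hp => hS p (Finset.mem_cons_of_mem hp))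
      (hinjT.mono (fun p hp => Finset.mem_cons_of_mem hp))
    have hap : (P a).Prime := hS a (Finset.mem_cons_self a S)
    have hcop : Nat.Coprime (P a) (∏ q ∈ S, P q) := by
      apply Nat.Coprime.prod_right
      intro q hq
      refine (Nat.coprime_primes hap (hS q (Finset.mem_cons_of_mem hq))).mpr ?_
      intro h
      exact ha (by
        have := hinjT (Finset.mem_cons_self a S) (Finset.mem_cons_of_mem hq) h
        rwa [this])
    have : IsCoprime ((P a : ℕ) : ℤ) ((∏ q ∈ S, P q : ℕ) : ℤ) := by
      rw [Nat.isCoprime_iff_coprime]; exact hcop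
    obtain ⟨x, y, hxy⟩ := this
    refine ⟨fun p => if p = a then y else x * u p, ?_⟩
    rw [Finset.sum_cons]
    have h1 : (Finset.cons a S ha).erase a = S := by
      rw [Finset.erase_cons]
    have h2 : ∀ p ∈ S, (Finset.cons a S ha).erase p = Finset.cons a (S.erase p)
        (by simp [ha, Finset.mem_erase]) := by
      intro p hp
      ext q
      simp only [Finset.mem_erase, Finset.mem_cons]
      constructor
      · rintro ⟨hq, (rfl | hq')⟩
        · exact Or.inl rfl
        · exact Or.inr ⟨hq, hq'⟩
      · rintro (rfl | ⟨hq, hq'⟩)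
        · exact ⟨by rintro rfl; exact ha hp, Or.inl rfl⟩
        · exact ⟨hq, Or.inr hq'⟩
    rw [h1]
    dsimp only
    rw [if_pos rfl]
    have h3 : ∑ p ∈ S, (if p = a then y else x * u p) * ∏ q ∈ (Finset.cons a S ha).erase p, (P q:ℤ)
        = ∑ p ∈ S, (x * u p) * ((P a:ℤ) * ∏ q ∈ S.erase p, (P q:ℤ)) := by
      apply Finset.sum_congr rfl
      intro p hp
      rw [if_neg (by rintro rfl; exact ha hp), h2 p hp]
      push_cast [Finset.prod_cons]
      ring
    rw [h3]
    have h4 : ∑ p ∈ S, (x * u p) * ((P a:ℤ) * ∏ q ∈ S.erase p, (P q:ℤ))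
        = (x * (P a:ℤ)) * ∑ p ∈ S, u p * ∏ q ∈ S.erase p, (P q:ℤ) := by
      rw [Finset.mul_sum]; apply Finset.sum_congr rfl; intros; ring
    rw [h4, hu]
    push_cast at hxy ⊢
    linarith
namespace SigmaAsyAux

variable {d : ℕ} (P : Fin d → ℕ)

/-- product of all primes -/
def delta : ℤ := ∏ j, (P j : ℤ)

/-- product of all primes except the i-th -/
def Qv (i : Fin d) : ℤ := ∏ j ∈ Finset.univ.erase i, (P j : ℤ)

lemma P_mul_Qv (i : Fin d) : (P i : ℤ) * Qv P i = delta P := by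
  unfold delta Qv
  exact Finset.mul_prod_erase Finset.univ (fun j => (P j : ℤ)) (Finset.mem_univ i)

lemma Qv_dvd_delta (i : Fin d) : Qv P i ∣ delta P := ⟨P i, by rw [← P_mul_Qv P i]; ring⟩

lemma P_dvd_delta (i : Fin d) : (P i : ℤ) ∣ delta P := ⟨Qv P i, (P_mul_Qv P i).symm⟩

lemma P_dvd_Qv {i j : Fin d} (h : i ≠ j) : (P i : ℤ) ∣ Qv P j :=
  Finset.dvd_prod_of_mem _ (by simp [Finset.mem_erase, h])

lemma Qv_pos (hP : ∀ i, (P i).Prime) (i : Fin d) : 0 < Qv P i := by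
  apply Finset.prod_pos
  intro j _
  exact_mod_cast (hP j).pos

lemma delta_pos (hP : ∀ i, (P i).Prime) : 0 < delta P := by
  apply Finset.prod_pos
  intro j _
  exact_mod_cast (hP j).pos

/-- last-row entries as a function of the column index in ℕ -/
def vrow (m' : ℕ) (j : ℕ) : ℤ :=
  if h : m' ≤ j ∧ j - m' < d then Qv P ⟨j - m', h.2⟩
  else if j = m' + d then -delta P else 0

/-- the matrix -/
def Amat (m' : ℕ) : Matrix (Fin (m' + 1)) (Fin (m' + 1 + d)) ℤ :=
  Matrix.of fun i j =>
    if (i : ℕ) < m' then (if (j : ℕ) = (i : ℕ) then 1 else 0) else vrow P m' (j : ℕ)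

variable {m' : ℕ}

lemma mulVec_lt (x : Fin (m' + 1 + d) → ℤ) (i : Fin (m' + 1)) (hi : (i : ℕ) < m') :
    (Amat P m').mulVec x i = x ⟨(i : ℕ), by omega⟩ := by
  unfold Matrix.mulVec dotProduct Amat
  simp only [Matrix.of_apply, if_pos hi]
  rw [Finset.sum_eq_single (⟨(i : ℕ), by omega⟩ : Fin (m' + 1 + d))]
  · simp
  · intro j _ hj
    have : ¬((j : ℕ) = (i : ℕ)) := by
      intro h; apply hj; exact Fin.ext h
    simp [this]
  · intro h; exact absurd (Finset.mem_univ _) h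

lemma mulVec_last (x : Fin (m' + 1 + d) → ℤ) (i : Fin (m' + 1)) (hi : ¬ (i : ℕ) < m') :
    (Amat P m').mulVec x i =
      (∑ j : Fin d, Qv P j * x ⟨m' + (j : ℕ), by omega⟩) - delta P * x ⟨m' + d, by omega⟩ := by
  unfold Matrix.mulVec dotProduct Amat
  simp only [Matrix.of_apply, if_neg hi]
  have key : ∀ j : Fin (m' + 1 + d), vrow P m' (j : ℕ) * x j =
      (fun k : ℕ => if h : k < m' + 1 + d then vrow P m' k * x ⟨k, h⟩ else 0) (j : ℕ) := by
    intro j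
    simp [j.isLt]
  rw [Finset.sum_congr rfl (fun j _ => key j),
    Fin.sum_univ_eq_sum_range (fun k => if h : k < m' + 1 + d then vrow P m' k * x ⟨k, h⟩ else 0)]
  have hn : Finset.range (m' + 1 + d) = Finset.range (m' + d + 1) := by
    rw [show m' + 1 + d = m' + d + 1 from by omega]
  rw [hn, Finset.sum_range_succ, Finset.sum_range_add]
  have h1 : ∀ k ∈ Finset.range m',
      (if h : k < m' + 1 + d then vrow P m' k * x ⟨k, h⟩ else 0) = 0 := by
    intro k hk
    rw [Finset.mem_range] at hk
    rw [dif_pos (by omega)]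
    have : vrow P m' k = 0 := by
      unfold vrow
      rw [dif_neg (by omega), if_neg (by omega)]
    rw [this, zero_mul]
  rw [Finset.sum_eq_zero h1, zero_add]
  have h2 : (if h : m' + d < m' + 1 + d then vrow P m' (m' + d) * x ⟨m' + d, h⟩ else 0)
      = -delta P * x ⟨m' + d, by omega⟩ := by
    rw [dif_pos (by omega)]
    have : vrow P m' (m' + d) = -delta P := by
      unfold vrow
      rw [dif_neg (by omega), if_pos rfl]
    rw [this]
  rw [h2]
  have h3 : ∀ k ∈ Finset.range d,
      (if h : m' + k < m' + 1 + d then vrow P m' (m' + k) * x ⟨m' + k, h⟩ else 0)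
      = (fun k : ℕ => if h : k < d then Qv P ⟨k, h⟩ * x ⟨m' + k, by omega⟩ else 0) k := by
    intro k hk
    rw [Finset.mem_range] at hk
    dsimp only
    rw [dif_pos (by omega), dif_pos hk]
    have : vrow P m' (m' + k) = Qv P ⟨k, hk⟩ := by
      unfold vrow
      rw [dif_pos (by constructor <;> omega)]
      congr 1
      exact Fin.ext (by simp)
    rw [this]
  rw [Finset.sum_congr rfl h3,
    ← Fin.sum_univ_eq_sum_range (fun k => if h : k < d then Qv P ⟨k, h⟩ * x ⟨m' + k, by omega⟩ else 0)]
  have h4 : ∀ j : Fin d,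
      (if h : (j : ℕ) < d then Qv P ⟨(j : ℕ), h⟩ * x ⟨m' + (j : ℕ), by omega⟩ else 0)
      = Qv P j * x ⟨m' + (j : ℕ), by omega⟩ := by
    intro j
    rw [dif_pos j.isLt]
  rw [Finset.sum_congr rfl (fun j _ => h4 j)]
  ring


lemma bezout_fin (hP : ∀ i, (P i).Prime) (hinj : Function.Injective P) (hd : 0 < d) :
    ∃ u : Fin d → ℤ, ∑ i, u i * Qv P i = 1 := by
  have : Nonempty (Fin d) := ⟨⟨0, hd⟩⟩
  obtain ⟨u, hu⟩ := bezout_primes_family (P := P) Finset.univ (fun i _ => hP i)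
    hinj.injOn Finset.univ_nonempty
  exact ⟨u, by simpa [Qv] using hu⟩

lemma mulVec_build (b : Fin (m' + 1) → ℤ) (y : Fin d → ℤ) (z : ℤ)
    (hsum : (∑ j, Qv P j * y j) - delta P * z = b ⟨m', by omega⟩) :
    (Amat P m').mulVec (fun j => if hj : (j : ℕ) < m' then b ⟨(j : ℕ), by omega⟩
      else if hj2 : (j : ℕ) - m' < d then y ⟨(j : ℕ) - m', hj2⟩ else z) = b := by
  set x : Fin (m' + 1 + d) → ℤ := fun j => if hj : (j : ℕ) < m' then b ⟨(j : ℕ), by omega⟩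
      else if hj2 : (j : ℕ) - m' < d then y ⟨(j : ℕ) - m', hj2⟩ else z with hxdef
  have hX2 : ∀ j : Fin d, x ⟨m' + (j : ℕ), by omega⟩ = y j := by
    intro j
    simp only [hxdef]
    rw [dif_neg (by simp), dif_pos (by simp [j.isLt])]
    congr 1
    exact Fin.ext (by simp)
  have hX3 : x ⟨m' + d, by omega⟩ = z := by
    simp only [hxdef]
    rw [dif_neg (by simp), dif_neg (by simp)]
  funext i
  by_cases hi : (i : ℕ) < m'
  · rw [mulVec_lt P x i hi]
    simp only [hxdef]
    rw [dif_pos hi]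
  · rw [mulVec_last P x i hi]
    have hieq : i = ⟨m', by omega⟩ := Fin.ext (by have := i.isLt; simp; omega)
    rw [Finset.sum_congr rfl (fun j _ => by rw [hX2 j]), hX3, hieq, hsum]

lemma exists_nonneg_sol (hP : ∀ i, (P i).Prime) (hinj : Function.Injective P) (hd : 0 < d)
    (b : Fin (m' + 1) → ℤ) (hb : ∀ i : Fin (m' + 1), (i : ℕ) < m' → 0 ≤ b i) :
    ∃ x : Fin (m' + 1 + d) → ℤ, (∀ j, 0 ≤ x j) ∧ (Amat P m').mulVec x = b := by
  obtain ⟨u, hu⟩ := bezout_fin P hP hinj hd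
  set c : ℤ := b ⟨m', by omega⟩ with hc
  set y : Fin d → ℤ := fun i => u i * c + (P i : ℤ) * ((u i * c).natAbs : ℤ) with hy
  set z : ℤ := ∑ i, ((u i * c).natAbs : ℤ) with hz
  have hynn : ∀ i, 0 ≤ y i := by
    intro i
    have h1 : (1 : ℤ) ≤ (P i : ℤ) := by exact_mod_cast (hP i).one_lt.le
    have h3 : ((u i * c).natAbs : ℤ) = |u i * c| := Int.natCast_natAbs _
    have h4 : -(u i * c) ≤ |u i * c| := neg_le_abs _
    have h5 : (0:ℤ) ≤ |u i * c| := abs_nonneg _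
    simp only [hy]
    nlinarith
  have hznn : 0 ≤ z := Finset.sum_nonneg fun i _ => Int.natCast_nonneg _
  have hsum : (∑ j, Qv P j * y j) - delta P * z = c := by
    have hterm : ∀ j : Fin d, Qv P j * y j
        = c * (u j * Qv P j) + delta P * ((u j * c).natAbs : ℤ) := by
      intro j
      simp only [hy]
      linear_combination ((u j * c).natAbs : ℤ) * (P_mul_Qv P j)
    rw [Finset.sum_congr rfl (fun j _ => hterm j), Finset.sum_add_distrib, ← Finset.mul_sum,
      ← Finset.mul_sum, hu, ← hz]
    ring
  refine ⟨_, ?_, mulVec_build P b y z hsum⟩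
  intro j
  split
  · exact hb _ (by assumption)
  · split
    · exact hynn _
    · exact hznn

lemma exists_int_sol (hP : ∀ i, (P i).Prime) (hinj : Function.Injective P) (hd : 0 < d)
    (b : Fin (m' + 1) → ℤ) :
    ∃ x : Fin (m' + 1 + d) → ℤ, (Amat P m').mulVec x = b := by
  obtain ⟨u, hu⟩ := bezout_fin P hP hinj hd
  set c : ℤ := b ⟨m', by omega⟩ with hc
  have hsum : (∑ j, Qv P j * (u j * c)) - delta P * 0 = c := by
    have : ∀ j : Fin d, Qv P j * (u j * c) = c * (u j * Qv P j) := by intro j; ring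
    rw [Finset.sum_congr rfl (fun j _ => this j), ← Finset.mul_sum, hu]
    ring
  exact ⟨_, mulVec_build P b (fun j => u j * c) 0 hsum⟩

lemma solution_eq_lt (x : Fin (m' + 1 + d) → ℤ) (b : Fin (m' + 1) → ℤ)
    (hAx : (Amat P m').mulVec x = b) (j : ℕ) (hj : j < m') :
    x ⟨j, by omega⟩ = b ⟨j, by omega⟩ := by
  have := congrFun hAx ⟨j, by omega⟩
  rwa [mulVec_lt P x _ (by simpa using hj)] at this

lemma solution_eq_last (x : Fin (m' + 1 + d) → ℤ) (b : Fin (m' + 1) → ℤ)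
    (hAx : (Amat P m').mulVec x = b) :
    (∑ j : Fin d, Qv P j * x ⟨m' + (j : ℕ), by omega⟩) - delta P * x ⟨m' + d, by omega⟩
      = b ⟨m', by omega⟩ := by
  have := congrFun hAx ⟨m', by omega⟩
  rwa [mulVec_last P x _ (by simp)] at this

lemma full_support (hP : ∀ i, (P i).Prime) (b : Fin (m' + 1) → ℤ)
    (hbp : ∀ i : Fin (m' + 1), (i : ℕ) < m' → b i ≠ 0)
    (hcneg : b ⟨m', by omega⟩ < 0)
    (hnd : ∀ i : Fin d, ¬ ((P i : ℤ) ∣ b ⟨m', by omega⟩))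
    (x : Fin (m' + 1 + d) → ℤ) (hx : ∀ j, 0 ≤ x j)
    (hAx : (Amat P m').mulVec x = b) : ∀ j, x j ≠ 0 := by
  intro j
  rcases lt_or_ge (j : ℕ) m' with hj | hj
  · have h := solution_eq_lt P x b hAx (j : ℕ) hj
    have hje : (⟨(j : ℕ), by omega⟩ : Fin (m' + 1 + d)) = j := Fin.ext rfl
    rw [hje] at h
    rw [h]
    exact hbp _ (by simpa using hj)
  · rcases lt_or_ge ((j : ℕ) - m') d with hj2 | hj2
    · -- middle block
      intro hxj
      set i : Fin d := ⟨(j : ℕ) - m', hj2⟩ with hi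
      apply hnd i
      rw [← solution_eq_last P x b hAx]
      apply dvd_sub
      · apply Finset.dvd_sum
        intro k _
        by_cases hk : k = i
        · have hji : (⟨m' + (k : ℕ), by omega⟩ : Fin (m' + 1 + d)) = j :=
            Fin.ext (by simp [hk, hi]; omega)
          rw [hji, hxj, mul_zero]
          exact dvd_zero _
        · exact Dvd.dvd.mul_right (P_dvd_Qv P (fun h => hk h.symm)) _
      · exact Dvd.dvd.mul_right (P_dvd_delta P i) _
    · -- last column
      intro hxj
      have hje : (⟨m' + d, by omega⟩ : Fin (m' + 1 + d)) = j := Fin.ext (by simp; omega)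
      have h := solution_eq_last P x b hAx
      rw [hje, hxj, mul_zero, sub_zero] at h
      have hpos : (0:ℤ) ≤ ∑ k : Fin d, Qv P k * x ⟨m' + (k : ℕ), by omega⟩ :=
        Finset.sum_nonneg fun k _ => mul_nonneg (Qv_pos P hP k).le (hx _)
      linarith


lemma bigOmega_prod_primes_family {ι : Type*} (T : Finset ι) (P : ι → ℕ)
    (hP : ∀ i ∈ T, (P i).Prime) : bigOmega (∏ i ∈ T, P i) = T.card := by
  induction T using Finset.cons_induction with
  | empty => simp [bigOmega]
  | cons a T ha ih =>
    rw [Finset.prod_cons, Finset.card_cons,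
      bigOmega_mul (hP a (Finset.mem_cons_self a T)).ne_zero
        (Finset.prod_ne_zero_iff.mpr fun p hp => (hP p (Finset.mem_cons_of_mem hp)).ne_zero)]
    have h1 : bigOmega (P a) = 1 := by
      simp [bigOmega, Nat.primeFactorsList_prime (hP a (Finset.mem_cons_self a T))]
    rw [h1, ih (fun p hp => hP p (Finset.mem_cons_of_mem hp))]
    omega

/-- the natural-number product of the primes -/
def deltaNat : ℕ := ∏ i, P i

lemma delta_eq_cast : delta P = ((deltaNat P : ℕ) : ℤ) := by
  unfold delta deltaNat
  push_cast
  rfl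

lemma deltaNat_pos (hP : ∀ i, (P i).Prime) : 0 < deltaNat P :=
  Finset.prod_pos fun i _ => (hP i).pos

lemma bigOmega_deltaNat (hP : ∀ i, (P i).Prime) : bigOmega (deltaNat P) = d := by
  rw [deltaNat, bigOmega_prod_primes_family Finset.univ P (fun i _ => hP i)]
  simp

lemma natAbs_delta : (delta P).natAbs = deltaNat P := by
  rw [delta_eq_cast]; exact Int.natAbs_natCast _

lemma bigOmega_le_of_int_dvd (hP : ∀ i, (P i).Prime) {a : ℤ} (ha : a ∣ delta P) :
    bigOmega a.natAbs ≤ d := by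
  rw [← bigOmega_deltaNat P hP]
  apply bigOmega_le_of_dvd
  · rw [← natAbs_delta P]
    exact Int.natAbs_dvd_natAbs.mpr ha
  · rw [← natAbs_delta P, Int.natAbs_ne_zero]
    exact (delta_pos P hP).ne'

lemma vrow_dvd_delta {m' : ℕ} (j : ℕ) (hj : m' ≤ j) (hj2 : j ≤ m' + d) :
    vrow P m' j ∣ delta P := by
  unfold vrow
  split
  · exact Qv_dvd_delta P _
  · split
    · exact neg_dvd.mpr dvd_rfl
    · exfalso; omega

lemma vrow_eq_zero {m' : ℕ} (j : ℕ) (hj : j < m') : vrow P m' j = 0 := by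
  unfold vrow
  rw [dif_neg (by omega), if_neg (by omega)]

lemma phiMax_Amat {m' : ℕ} (hP : ∀ i, (P i).Prime) (hd : 0 < d) : phiMax (Amat P m') = d := by
  have hub : ∀ t ∈ {t : ℕ | ∃ g : Fin (m' + 1) → Fin (m' + 1 + d), Function.Injective g ∧
      ((Amat P m').submatrix id g).det ≠ 0 ∧
      t = bigOmega ((Amat P m').submatrix id g).det.natAbs}, t ≤ d := by
    rintro t ⟨g, hginj, hgdet, rfl⟩
    -- every row index < m' is hit by g
    have hhit : ∀ i : ℕ, i < m' → ∃ k, ((g k : ℕ) = i) := by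
      intro i hi
      by_contra hno
      push_neg at hno
      apply hgdet
      apply Matrix.det_eq_zero_of_row_eq_zero ⟨i, by omega⟩
      intro l
      simp only [Matrix.submatrix_apply, id_eq, Amat, Matrix.of_apply]
      rw [if_pos (by simpa using hi), if_neg (by simpa using hno l)]
    -- there is an index mapping to a big column
    have hbig : ∃ k₀, m' ≤ (g k₀ : ℕ) := by
      by_contra hno
      push_neg at hno
      have hinj2 : Function.Injective (fun k : Fin (m' + 1) => (⟨(g k : ℕ), hno k⟩ : Fin m')) := by
        intro a b hab
        have hv := congrArg Fin.val hab
        simp at hv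
        exact hginj (Fin.ext hv)
      have := Fintype.card_le_of_injective _ hinj2
      simp at this
    obtain ⟨k₀, hk₀⟩ := hbig
    -- uniqueness of the big index
    have huniq : ∀ k, m' ≤ (g k : ℕ) → k = k₀ := by
      intro k hk
      by_contra hne
      choose φ hφ using hhit
      set Φ : Fin m' → Fin (m' + 1) := fun i => φ (i : ℕ) i.isLt with hΦ
      have hΦinj : Function.Injective Φ := by
        intro a b hab
        have h2 : (g (Φ a) : ℕ) = (g (Φ b) : ℕ) := by rw [hab]
        rw [show (g (Φ a) : ℕ) = (a : ℕ) from hφ (a : ℕ) a.isLt,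
          show (g (Φ b) : ℕ) = (b : ℕ) from hφ (b : ℕ) b.isLt] at h2
        exact Fin.ext h2
      have hΦk : ∀ i : Fin m', Φ i ≠ k ∧ Φ i ≠ k₀ := by
        intro i
        have h2 : (g (Φ i) : ℕ) = (i : ℕ) := hφ (i : ℕ) i.isLt
        have hilt := i.isLt
        constructor <;> intro h <;> rw [h] at h2 <;> omega
      set T : Finset (Fin (m' + 1)) := Finset.univ.image Φ with hT
      have hTcard : T.card = m' := by
        rw [hT, Finset.card_image_of_injective _ hΦinj, Finset.card_univ, Fintype.card_fin]
      have hkT : k ∉ T := by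
        intro hmem
        rw [hT, Finset.mem_image] at hmem
        obtain ⟨i, _, hik⟩ := hmem
        exact (hΦk i).1 hik
      have hk₀T : k₀ ∉ T := by
        intro hmem
        rw [hT, Finset.mem_image] at hmem
        obtain ⟨i, _, hik⟩ := hmem
        exact (hΦk i).2 hik
      have hcard2 : (insert k (insert k₀ T)).card = m' + 2 := by
        rw [Finset.card_insert_of_notMem (by simp [hkT, hne]),
          Finset.card_insert_of_notMem hk₀T, hTcard]
      have hle := Finset.card_le_univ (insert k (insert k₀ T))
      rw [hcard2, Fintype.card_fin] at hle
      omega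
    -- the permutation
    set h : Fin (m' + 1) → Fin (m' + 1) := fun k =>
      if hk : (g k : ℕ) < m' then ⟨(g k : ℕ), by omega⟩ else ⟨m', by omega⟩ with hh
    have hhinj : Function.Injective h := by
      intro a b hab
      simp only [hh] at hab
      split_ifs at hab with h1 h2
      · exact hginj (Fin.ext (by simpa using congrArg Fin.val hab))
      · exfalso; have := congrArg Fin.val hab; simp at this; omega
      · exfalso; have := congrArg Fin.val hab; simp at this; omega
      · rw [huniq a (by omega), huniq b (by omega)]
    have hhbij : Function.Bijective h := (Finite.injective_iff_bijective).mp hhinj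
    set σ : Equiv.Perm (Fin (m' + 1)) := Equiv.ofBijective h hhbij with hσ
    set D : Matrix (Fin (m' + 1)) (Fin (m' + 1)) ℤ := Matrix.diagonal
      (fun k : Fin (m' + 1) => if (k : ℕ) < m' then 1 else vrow P m' (g k₀ : ℕ)) with hD
    have hMD : (Amat P m').submatrix id g = D.submatrix id ⇑σ := by
      ext i l
      have hiv := i.isLt
      have hσl : σ l = h l := rfl
      rw [Matrix.submatrix_apply, Matrix.submatrix_apply, id_eq, hσl]
      simp only [hh, hD, Amat, Matrix.of_apply, Matrix.diagonal_apply]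
      by_cases hgl : (g l : ℕ) < m'
      · rw [dif_pos hgl]
        by_cases hi : (i : ℕ) < m'
        · by_cases heq : ((g l : ℕ) = (i : ℕ))
          · have hieq : i = (⟨(g l : ℕ), by omega⟩ : Fin (m' + 1)) := Fin.ext (by simp [← heq])
            rw [if_pos hi, if_pos heq, if_pos hieq, if_pos hi]
          · have hne : i ≠ (⟨(g l : ℕ), by omega⟩ : Fin (m' + 1)) := by
              intro hc
              apply heq
              rw [hc]
            rw [if_pos hi, if_neg heq, if_neg hne]
        · have hv0 : vrow P m' (g l : ℕ) = 0 := vrow_eq_zero P _ hgl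
          have hne : i ≠ (⟨(g l : ℕ), by omega⟩ : Fin (m' + 1)) := by
            intro hc
            rw [hc] at hi
            simp at hi
            omega
          rw [if_neg hi, if_neg hne, hv0]
      · rw [dif_neg hgl]
        have hlk₀ : l = k₀ := huniq l (by omega)
        by_cases hi : (i : ℕ) < m'
        · have hne : i ≠ (⟨m', by omega⟩ : Fin (m' + 1)) := by
            intro hc
            rw [hc] at hi
            simp at hi
          have heq : ¬((g l : ℕ) = (i : ℕ)) := by omega
          rw [if_pos hi, if_neg heq, if_neg hne]
        · have hieq : i = (⟨m', by omega⟩ : Fin (m' + 1)) := Fin.ext (by simp; omega)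
          rw [if_neg hi, if_pos hieq, if_neg hi, hlk₀]
    have hdetD : D.det = vrow P m' (g k₀ : ℕ) := by
      rw [hD, Matrix.det_diagonal]
      rw [Finset.prod_eq_single (⟨m', by omega⟩ : Fin (m' + 1))]
      · rw [if_neg (by simp)]
      · intro k _ hk
        have hkv := k.isLt
        have hkm : (k : ℕ) ≠ m' := fun hc => hk (Fin.ext (by simpa using hc))
        rw [if_pos (by omega)]
      · intro hc; exact absurd (Finset.mem_univ _) hc
    have hdet : ((Amat P m').submatrix id g).det.natAbs = (vrow P m' (g k₀ : ℕ)).natAbs := by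
      rw [hMD, Matrix.det_permute' σ D, hdetD]
      simp [Int.natAbs_mul, Int.units_natAbs]
    rw [hdet]
    have hlt := (g k₀).isLt
    exact bigOmega_le_of_int_dvd P hP (vrow_dvd_delta P _ hk₀ (by omega))
  have hmem : d ∈ {t : ℕ | ∃ g : Fin (m' + 1) → Fin (m' + 1 + d), Function.Injective g ∧
      ((Amat P m').submatrix id g).det ≠ 0 ∧
      t = bigOmega ((Amat P m').submatrix id g).det.natAbs} := by
    set g₀ : Fin (m' + 1) → Fin (m' + 1 + d) := fun k =>
      if hk : (k : ℕ) < m' then ⟨(k : ℕ), by omega⟩ else ⟨m' + d, by omega⟩ with hg₀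
    have hg₀inj : Function.Injective g₀ := by
      intro a b hab
      have hav := a.isLt
      have hbv := b.isLt
      simp only [hg₀] at hab
      split_ifs at hab with h1 h2
      · exact Fin.ext (by simpa using congrArg Fin.val hab)
      · exfalso; have := congrArg Fin.val hab; simp at this; omega
      · exfalso; have := congrArg Fin.val hab; simp at this; omega
      · exact Fin.ext (by omega)
    set D₀ : Matrix (Fin (m' + 1)) (Fin (m' + 1)) ℤ := Matrix.diagonal
      (fun k : Fin (m' + 1) => if (k : ℕ) < m' then 1 else -delta P) with hD₀
    have hvlast : vrow P m' (m' + d) = -delta P := by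
      unfold vrow
      rw [dif_neg (by omega), if_pos rfl]
    have hMD₀ : (Amat P m').submatrix id g₀ = D₀ := by
      ext i l
      have hiv := i.isLt
      have hlv := l.isLt
      rw [Matrix.submatrix_apply, id_eq]
      simp only [hg₀, hD₀, Amat, Matrix.of_apply, Matrix.diagonal_apply]
      by_cases hl : (l : ℕ) < m'
      · rw [dif_pos hl]
        by_cases hi : (i : ℕ) < m'
        · by_cases heq : ((l : ℕ) = (i : ℕ))
          · have hieq : i = l := Fin.ext heq.symm
            rw [if_pos hi, if_pos (by simpa using heq), if_pos hieq, if_pos hi]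
          · have hne : i ≠ l := fun hc => heq ((congrArg Fin.val hc).symm)
            rw [if_pos hi, if_neg (by simpa using heq), if_neg hne]
        · have hne : i ≠ l := by
            intro hc
            rw [hc] at hi
            exact hi hl
          rw [if_neg hi, if_neg hne, vrow_eq_zero P _ (by simpa using hl)]
      · rw [dif_neg hl]
        by_cases hi : (i : ℕ) < m'
        · have hne : i ≠ l := by
            intro hc
            rw [hc] at hi
            exact hl hi
          have heq : ¬((m' + d : ℕ) = (i : ℕ)) := by omega
          rw [if_pos hi, if_neg (by simpa using heq), if_neg hne]
        · have hieq : i = l := Fin.ext (by omega)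
          rw [if_neg hi, if_pos hieq, if_neg hi]
          simpa using hvlast
    have hdetD₀ : D₀.det = -delta P := by
      rw [hD₀, Matrix.det_diagonal]
      rw [Finset.prod_eq_single (⟨m', by omega⟩ : Fin (m' + 1))]
      · rw [if_neg (by simp)]
      · intro k _ hk
        have hkv := k.isLt
        have hkm : (k : ℕ) ≠ m' := fun hc => hk (Fin.ext (by simpa using hc))
        rw [if_pos (by omega)]
      · intro hc; exact absurd (Finset.mem_univ _) hc
    refine ⟨g₀, hg₀inj, ?_, ?_⟩
    · rw [hMD₀, hdetD₀]
      simp only [neg_ne_zero]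
      exact (delta_pos P hP).ne'
    · rw [hMD₀, hdetD₀, Int.natAbs_neg, natAbs_delta]
      exact (bigOmega_deltaNat P hP).symm
  unfold phiMax
  exact le_antisymm (csSup_le ⟨d, hmem⟩ hub) (le_csSup ⟨d, fun t ht => hub t ht⟩ hmem)


lemma ncard_univ_pi {m : ℕ} (t : Fin m → Set ℤ) :
    (Set.univ.pi t).ncard = ∏ i, (t i).ncard := by
  rw [← Nat.card_coe_set_eq, Nat.card_congr (Equiv.Set.univPi t), Nat.card_pi]
  simp [Nat.card_coe_set_eq]

lemma ncard_Icc_int (a b : ℤ) : (Set.Icc a b).ncard = (b + 1 - a).toNat := by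
  rw [← Finset.coe_Icc, Set.ncard_coe_finset, Int.card_Icc]

lemma sigmaFn_le_card {m n : ℕ} (A : Matrix (Fin m) (Fin n) ℤ) (b : Fin m → ℤ)
    (x : Fin n → ℤ) (hx : ∀ j, 0 ≤ x j) (hAx : A.mulVec x = b) :
    sigmaFn A b ≤ (n : ℕ∞) := by
  have hmem : ((Set.ncard {j | x j ≠ 0} : ℕ) : ℕ∞) ∈
      {k : ℕ∞ | ∃ x : Fin n → ℤ, (∀ j, 0 ≤ x j) ∧ A.mulVec x = b ∧
        (Set.ncard {j | x j ≠ 0} : ℕ∞) = k} := ⟨x, hx, hAx, rfl⟩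
  refine le_trans (sInf_le hmem) ?_
  rw [Nat.cast_le]
  calc Set.ncard {j | x j ≠ 0} ≤ Set.ncard (Set.univ : Set (Fin n)) :=
        Set.ncard_le_ncard (Set.subset_univ _) Set.finite_univ
    _ = n := by rw [Set.ncard_univ]; simp

lemma exists_sol_of_sigmaFn_le {m n : ℕ} {A : Matrix (Fin m) (Fin n) ℤ} {b : Fin m → ℤ} {k : ℕ}
    (h : sigmaFn A b ≤ (k : ℕ∞)) :
    ∃ x : Fin n → ℤ, (∀ j, 0 ≤ x j) ∧ A.mulVec x = b := by
  by_contra hno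
  push_neg at hno
  have hempty : {k' : ℕ∞ | ∃ x : Fin n → ℤ, (∀ j, 0 ≤ x j) ∧ A.mulVec x = b ∧
      (Set.ncard {j | x j ≠ 0} : ℕ∞) = k'} = ∅ := by
    ext k'
    simp only [Set.mem_setOf_eq, Set.mem_empty_iff_false, iff_false]
    rintro ⟨x, hx, hAx, _⟩
    exact hno x hx hAx
  rw [sigmaFn, hempty, sInf_empty, top_le_iff] at h
  exact (ENat.coe_ne_top k) h

lemma sigmaFn_not_le {m n : ℕ} {A : Matrix (Fin m) (Fin n) ℤ} {b : Fin m → ℤ} {k : ℕ}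
    (hk : k < n)
    (hfull : ∀ x : Fin n → ℤ, (∀ j, 0 ≤ x j) → A.mulVec x = b → ∀ j, x j ≠ 0) :
    ¬ sigmaFn A b ≤ (k : ℕ∞) := by
  intro h
  have hlow : ((n : ℕ) : ℕ∞) ≤ sigmaFn A b := by
    apply le_sInf
    rintro k' ⟨x, hx, hAx, rfl⟩
    have huniv : {j | x j ≠ 0} = Set.univ := Set.eq_univ_of_forall (hfull x hx hAx)
    rw [huniv, Set.ncard_univ]
    simp
  have hc := le_trans hlow h
  rw [Nat.cast_le] at hc
  omega

lemma rank_Amat {m' : ℕ} (hP : ∀ i, (P i).Prime) (hinj : Function.Injective P) (hd : 0 < d) :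
    (Amat P m').rank = m' + 1 := by
  have hsurj : Function.Surjective (Amat P m').mulVecLin := by
    intro b
    obtain ⟨x, hx⟩ := exists_int_sol P hP hinj hd b
    exact ⟨x, by rwa [Matrix.mulVecLin_apply]⟩
  show Module.finrank ℤ (LinearMap.range (Amat P m').mulVecLin) = m' + 1
  rw [LinearMap.range_eq_top.mpr hsurj, finrank_top, Module.finrank_pi, Fintype.card_fin]

lemma sparseRatio_le_one_sub {m' : ℕ} (hP : ∀ i, (P i).Prime) (hinj : Function.Injective P)
    (hd : 0 < d) (k t : ℕ) (hk : k ≤ m' + d) (ht1 : 1 ≤ t) (htδ : deltaNat P ≤ t) :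
    sparseRatio (Amat P m') k t ≤ 1 - 1 / (3 * 2 ^ m' * (deltaNat P : ℝ)) := by
  set A := Amat P m' with hA
  set δ : ℕ := deltaNat P with hδ
  set K : ℕ := (t - 1) / δ with hK
  have hδpos : 0 < δ := deltaNat_pos P hP
  set N : Set (Fin (m' + 1) → ℤ) :=
    {b | (∀ i, |b i| ≤ (t : ℤ)) ∧ sigmaFn A b ≤ (k : ℕ∞)} with hN
  set Dset : Set (Fin (m' + 1) → ℤ) :=
    {b | (∀ i, |b i| ≤ (t : ℤ)) ∧
      ∃ x : Fin (m' + 1 + d) → ℤ, (∀ j, 0 ≤ x j) ∧ A.mulVec x = b} with hDset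
  set U : Fin (m' + 1) → Set ℤ :=
    fun i => if (i : ℕ) < m' then Set.Icc 0 (t : ℤ) else Set.Icc (-(t : ℤ)) (t : ℤ) with hU
  set Bs : Fin (m' + 1) → Set ℤ :=
    fun i => if (i : ℕ) < m' then Set.Icc 1 (t : ℤ)
      else (fun k' : ℤ => -1 - (δ : ℤ) * k') '' (Set.Icc 0 (K : ℤ)) with hBs
  set B : Set (Fin (m' + 1) → ℤ) := Set.univ.pi Bs with hB
  have hUfin : ∀ i, (U i).Finite := by
    intro i
    simp only [hU]
    split
    · exact Set.finite_Icc _ _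
    · exact Set.finite_Icc _ _
  have hpiUfin : (Set.univ.pi U).Finite := Set.Finite.pi hUfin
  have hDsubU : Dset ⊆ Set.univ.pi U := by
    rintro b ⟨hband, x, hx, hAx⟩
    intro i _
    simp only [hU]
    split
    · next hi =>
      constructor
      · have hbi := solution_eq_lt P x b hAx (i : ℕ) hi
        rw [← hbi]
        exact hx _
      · exact (abs_le.mp (hband i)).2
    · exact abs_le.mp (hband i)
  have hDfin : Dset.Finite := hpiUfin.subset hDsubU
  have hNsubD : N ⊆ Dset := by
    rintro b ⟨hband, hsig⟩
    exact ⟨hband, exists_sol_of_sigmaFn_le hsig⟩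
  have hδKle : (δ : ℤ) * (K : ℤ) ≤ (t : ℤ) - 1 := by
    have h1 : K * δ ≤ t - 1 := Nat.div_mul_le_self (t - 1) δ
    have h2 : ((t - 1 : ℕ) : ℤ) = (t : ℤ) - 1 := by
      rw [Nat.cast_sub ht1]; simp
    calc (δ:ℤ) * K = ((K * δ : ℕ) : ℤ) := by push_cast; ring
      _ ≤ ((t - 1 : ℕ) : ℤ) := by exact_mod_cast h1
      _ = (t:ℤ) - 1 := h2
  have htleδK : t ≤ δ * (K + 1) := by
    have h5 : δ * K + (t - 1) % δ = t - 1 := by rw [hK]; exact Nat.div_add_mod _ _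
    have h6 : (t - 1) % δ < δ := Nat.mod_lt _ hδpos
    have h7 : δ * (K + 1) = δ * K + δ := by ring
    omega
  have hBsubD : B ⊆ Dset := by
    intro b hb
    rw [hB, Set.mem_univ_pi] at hb
    have hbmid : ∀ i : Fin (m' + 1), (i : ℕ) < m' → b i ∈ Set.Icc 1 (t : ℤ) := by
      intro i hi
      have h := hb i
      simp only [hBs] at h
      rwa [if_pos hi] at h
    have hblast : ∃ k' : ℤ, 0 ≤ k' ∧ k' ≤ (K : ℤ) ∧ b ⟨m', by omega⟩ = -1 - (δ:ℤ) * k' := by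
      have h := hb ⟨m', by omega⟩
      simp only [hBs] at h
      rw [if_neg (by simp)] at h
      obtain ⟨k', hk', hbk⟩ := h
      rw [Set.mem_Icc] at hk'
      exact ⟨k', hk'.1, hk'.2, hbk.symm⟩
    rw [hDset]
    have ht0 : (0:ℤ) ≤ (t:ℤ) := by positivity
    refine ⟨?_, ?_⟩
    · intro i
      by_cases hi : (i : ℕ) < m'
      · have h := hbmid i hi
        rw [Set.mem_Icc] at h
        rw [abs_le]
        exact ⟨by linarith [h.1], h.2⟩
      · obtain ⟨k', hk0, hkK, hbv⟩ := hblast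
        have hilt := i.isLt
        have hieq : i = ⟨m', by omega⟩ := Fin.ext (by simp; omega)
        rw [hieq, hbv, abs_le]
        have hm1 : (δ:ℤ) * k' ≤ (δ:ℤ) * K :=
          mul_le_mul_of_nonneg_left hkK (by positivity)
        have hm0 : (0:ℤ) ≤ (δ:ℤ) * k' := mul_nonneg (by positivity) hk0
        constructor <;> linarith
    · apply exists_nonneg_sol P hP hinj hd
      intro i hi
      have h := hbmid i hi
      rw [Set.mem_Icc] at h
      linarith [h.1]
  have hBN : ∀ b ∈ B, ¬ sigmaFn A b ≤ (k : ℕ∞) := by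
    intro b hb
    rw [hB, Set.mem_univ_pi] at hb
    have hbmid : ∀ i : Fin (m' + 1), (i : ℕ) < m' → b i ∈ Set.Icc 1 (t : ℤ) := by
      intro i hi
      have h := hb i
      simp only [hBs] at h
      rwa [if_pos hi] at h
    have hblast : ∃ k' : ℤ, 0 ≤ k' ∧ k' ≤ (K : ℤ) ∧ b ⟨m', by omega⟩ = -1 - (δ:ℤ) * k' := by
      have h := hb ⟨m', by omega⟩
      simp only [hBs] at h
      rw [if_neg (by simp)] at h
      obtain ⟨k', hk', hbk⟩ := h
      rw [Set.mem_Icc] at hk'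
      exact ⟨k', hk'.1, hk'.2, hbk.symm⟩
    obtain ⟨k', hk0, hkK, hbv⟩ := hblast
    apply sigmaFn_not_le (show k < m' + 1 + d by omega)
    apply full_support P hP b
    · intro i hi
      have h := hbmid i hi
      rw [Set.mem_Icc] at h
      intro h0
      rw [h0] at h
      have := h.1
      norm_num at this
    · rw [hbv]
      have hm0 : (0:ℤ) ≤ (δ:ℤ) * k' := mul_nonneg (by positivity) hk0
      linarith
    · intro i hdvd
      rw [hbv] at hdvd
      have hdδ : (P i : ℤ) ∣ (δ:ℤ) := by
        rw [hδ, ← delta_eq_cast]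
        exact P_dvd_delta P i
      have h3 : (P i:ℤ) ∣ (-1 - (δ:ℤ)*k') + (δ:ℤ)*k' := dvd_add hdvd (hdδ.mul_right k')
      have h4 : (P i:ℤ) ∣ (1:ℤ) := by
        have h5 : (-1 - (δ:ℤ)*k') + (δ:ℤ)*k' = -1 := by ring
        rw [h5] at h3
        exact (dvd_neg).mp h3
      have h6 : (P i : ℤ) ≤ 1 := Int.le_of_dvd one_pos h4
      have h7 : (2:ℤ) ≤ (P i : ℤ) := by exact_mod_cast (hP i).two_le
      linarith
  have hdisj : Disjoint N B := by
    rw [Set.disjoint_left]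
    intro b hbN hbB
    apply hBN b hbB
    rw [hN] at hbN
    exact hbN.2
  have hBfin : B.Finite := hpiUfin.subset (hBsubD.trans hDsubU)
  have hNfin : N.Finite := hDfin.subset hNsubD
  have hNB : N.ncard + B.ncard ≤ Dset.ncard := by
    rw [← Set.ncard_union_eq hdisj hNfin hBfin]
    exact Set.ncard_le_ncard (Set.union_subset hNsubD hBsubD) hDfin
  have hUcard : (Set.univ.pi U).ncard = (t + 1) ^ m' * (2 * t + 1) := by
    rw [ncard_univ_pi, Fin.prod_univ_castSucc]
    have h1 : ∀ i : Fin m', (U i.castSucc).ncard = t + 1 := by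
      intro i
      simp only [hU, Fin.coe_castSucc]
      rw [if_pos i.isLt, ncard_Icc_int]
      omega
    have h2 : (U (Fin.last m')).ncard = 2 * t + 1 := by
      simp only [hU, Fin.val_last]
      rw [if_neg (by omega), ncard_Icc_int]
      omega
    rw [Finset.prod_congr rfl (fun i _ => h1 i), Finset.prod_const, Finset.card_univ,
      Fintype.card_fin, h2]
  have hBcard : B.ncard = t ^ m' * (K + 1) := by
    rw [hB, ncard_univ_pi, Fin.prod_univ_castSucc]
    have h1 : ∀ i : Fin m', (Bs i.castSucc).ncard = t := by
      intro i
      simp only [hBs, Fin.coe_castSucc]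
      rw [if_pos i.isLt, ncard_Icc_int]
      omega
    have hinjk : Function.Injective (fun k' : ℤ => -1 - (δ:ℤ) * k') := by
      intro a b hab
      simp only at hab
      have hδne : (δ:ℤ) ≠ 0 := by exact_mod_cast hδpos.ne'
      have : (δ:ℤ) * a = (δ:ℤ) * b := by linarith
      exact mul_left_cancel₀ hδne this
    have h2 : (Bs (Fin.last m')).ncard = K + 1 := by
      simp only [hBs, Fin.val_last]
      rw [if_neg (by omega), Set.ncard_image_of_injective _ hinjk, ncard_Icc_int]
      have hcast : ((K:ℤ) + 1 - 0) = ((K + 1 : ℕ) : ℤ) := by push_cast; ring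
      rw [hcast, Int.toNat_natCast]
    rw [Finset.prod_congr rfl (fun i _ => h1 i), Finset.prod_const, Finset.card_univ,
      Fintype.card_fin, h2]
  have hkey : (t + 1) ^ m' * (2 * t + 1) ≤ 3 * 2 ^ m' * δ * (t ^ m' * (K + 1)) := by
    have ha : (t + 1) ^ m' ≤ 2 ^ m' * t ^ m' := by
      rw [← Nat.mul_pow]
      exact Nat.pow_le_pow_left (by omega) m'
    have hb2 : 2 * t + 1 ≤ 3 * (δ * (K + 1)) := by omega
    calc (t+1)^m' * (2*t+1) ≤ (2^m' * t^m') * (3*(δ*(K+1))) := Nat.mul_le_mul ha hb2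
      _ = 3 * 2^m' * δ * (t^m' * (K+1)) := by ring
  have h0D : 0 < Dset.ncard := by
    rw [Set.ncard_pos hDfin]
    refine ⟨0, ?_⟩
    rw [hDset]
    refine ⟨fun i => by simp, ?_⟩
    exact exists_nonneg_sol P hP hinj hd 0 (fun i _ => le_refl 0)
  show (N.ncard : ℝ) / (Dset.ncard : ℝ) ≤ 1 - 1 / (3 * 2 ^ m' * (δ : ℝ))
  have hcast1 : (N.ncard : ℝ) ≤ (Dset.ncard : ℝ) - (B.ncard : ℝ) := by
    have h := (Nat.cast_le (α := ℝ)).mpr hNB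
    push_cast at h
    linarith
  have hDpos : (0:ℝ) < (Dset.ncard : ℝ) := by exact_mod_cast h0D
  have hCpos : (0:ℝ) < 3 * 2 ^ m' * (δ:ℝ) := by positivity
  have hBU : (Dset.ncard:ℝ) ≤ (3 * 2 ^ m' * (δ:ℝ)) * (B.ncard:ℝ) := by
    have h1 : Dset.ncard ≤ (Set.univ.pi U).ncard := Set.ncard_le_ncard hDsubU hpiUfin
    have h2 : Dset.ncard ≤ 3 * 2^m' * δ * (t^m' * (K+1)) := by
      rw [hUcard] at h1
      omega
    calc (Dset.ncard:ℝ) ≤ ((3 * 2^m' * δ * (t^m' * (K+1)) : ℕ) : ℝ) := by exact_mod_cast h2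
      _ = (3*2^m'*(δ:ℝ)) * ((t^m' * (K+1) : ℕ):ℝ) := by push_cast; ring
      _ = (3*2^m'*(δ:ℝ)) * (B.ncard:ℝ) := by rw [hBcard]
  have hfrac : 1 / (3 * 2 ^ m' * (δ:ℝ)) ≤ (B.ncard:ℝ) / (Dset.ncard:ℝ) := by
    rw [div_le_div_iff₀ hCpos hDpos]
    calc 1 * (Dset.ncard:ℝ) = (Dset.ncard:ℝ) := one_mul _
      _ ≤ (3*2^m'*(δ:ℝ)) * (B.ncard:ℝ) := hBU
      _ = (B.ncard:ℝ) * (3*2^m'*(δ:ℝ)) := mul_comm _ _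
  calc (N.ncard : ℝ) / (Dset.ncard : ℝ)
      ≤ ((Dset.ncard:ℝ) - (B.ncard:ℝ)) / (Dset.ncard:ℝ) := by gcongr
    _ = 1 - (B.ncard:ℝ)/(Dset.ncard:ℝ) := by rw [sub_div, div_self hDpos.ne']
    _ ≤ 1 - 1 / (3 * 2 ^ m' * (δ:ℝ)) := by linarith


lemma Dset_finite {m' : ℕ} (t : ℕ) :
    ({b : Fin (m' + 1) → ℤ | (∀ i, |b i| ≤ (t : ℤ)) ∧
      ∃ x : Fin (m' + 1 + d) → ℤ, (∀ j, 0 ≤ x j) ∧ (Amat P m').mulVec x = b}).Finite := by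
  apply Set.Finite.subset (Set.Finite.pi (fun i : Fin (m' + 1) => Set.finite_Icc (-(t:ℤ)) t))
  intro b hb i _
  exact Set.mem_Icc.mpr (abs_le.mp (hb.1 i))

lemma Dset_nonempty {m' : ℕ} (hP : ∀ i, (P i).Prime) (hinj : Function.Injective P)
    (hd : 0 < d) (t : ℕ) :
    ({b : Fin (m' + 1) → ℤ | (∀ i, |b i| ≤ (t : ℤ)) ∧
      ∃ x : Fin (m' + 1 + d) → ℤ, (∀ j, 0 ≤ x j) ∧ (Amat P m').mulVec x = b}).Nonempty :=
  ⟨0, fun i => by simp, exists_nonneg_sol P hP hinj hd 0 (fun _ _ => le_rfl)⟩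

lemma sparseRatio_eq_one {m' : ℕ} (hP : ∀ i, (P i).Prime) (hinj : Function.Injective P)
    (hd : 0 < d) (t : ℕ) : sparseRatio (Amat P m') (m' + 1 + d) t = 1 := by
  unfold sparseRatio
  have hsets : {b : Fin (m' + 1) → ℤ | (∀ i, |b i| ≤ (t:ℤ)) ∧
        sigmaFn (Amat P m') b ≤ ((m' + 1 + d : ℕ) : ℕ∞)}
      = {b : Fin (m' + 1) → ℤ | (∀ i, |b i| ≤ (t:ℤ)) ∧
        ∃ x : Fin (m' + 1 + d) → ℤ, (∀ j, 0 ≤ x j) ∧ (Amat P m').mulVec x = b} := by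
    ext b
    simp only [Set.mem_setOf_eq]
    constructor
    · rintro ⟨hband, hsig⟩
      exact ⟨hband, exists_sol_of_sigmaFn_le hsig⟩
    · rintro ⟨hband, x, hx, hAx⟩
      exact ⟨hband, sigmaFn_le_card _ _ x hx hAx⟩
  rw [hsets]
  have hfin := Dset_finite P (m' := m') t
  have hne := Dset_nonempty P (m' := m') hP hinj hd t
  have hpos := (Set.ncard_pos hfin).mpr hne
  exact div_self (by exact_mod_cast hpos.ne')

end SigmaAsyAux

open SigmaAsyAux in
theorem exists_matrix_sigmaAsy_eq_m_add_d (m d : ℕ) (hm : 1 ≤ m) (hd : 1 ≤ d) :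
    ∃ A : Matrix (Fin m) (Fin (m + d)) ℤ,
      A.rank = m ∧
      phiMax A = d ∧
      Filter.Tendsto (sparseRatio A (m + d)) Filter.atTop (nhds 1) ∧
      ¬ Filter.Tendsto (sparseRatio A (m + d - 1)) Filter.atTop (nhds 1) ∧
      sigmaAsy A = m + d := by
  obtain ⟨m', rfl⟩ : ∃ m', m = m' + 1 := ⟨m - 1, by omega⟩
  obtain ⟨T, hTsub, hTcard⟩ := Nat.infinite_setOf_prime.exists_subset_card_eq d
  set P : Fin d → ℕ := fun i => ((T.orderIsoOfFin hTcard i : ℕ)) with hPdef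
  have hP : ∀ i, (P i).Prime := fun i => hTsub (T.orderIsoOfFin hTcard i).2
  have hPinj : Function.Injective P := by
    intro a b hab
    apply (T.orderIsoOfFin hTcard).injective
    exact Subtype.ext hab
  have hd0 : 0 < d := hd
  have hTend : Filter.Tendsto (sparseRatio (Amat P m') (m' + 1 + d)) Filter.atTop (nhds 1) := by
    have heq : sparseRatio (Amat P m') (m' + 1 + d) = fun _ => (1 : ℝ) :=
      funext (sparseRatio_eq_one P hP hPinj hd0)
    rw [heq]
    exact tendsto_const_nhds
  have hnotk : ∀ k ≤ m' + d,
      ¬ Filter.Tendsto (sparseRatio (Amat P m') k) Filter.atTop (nhds 1) := by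
    intro k hk hT
    have hδR : (0:ℝ) < (deltaNat P : ℝ) := by exact_mod_cast deltaNat_pos P hP
    have hCpos : (0:ℝ) < 3 * 2 ^ m' * (deltaNat P : ℝ) :=
      mul_pos (by positivity) hδR
    have hlt : 1 - 1 / (3 * 2 ^ m' * (deltaNat P : ℝ)) < 1 := by
      have h1 : (0:ℝ) < 1 / (3 * 2 ^ m' * (deltaNat P : ℝ)) := by positivity
      linarith
    have hev1 : ∀ᶠ t : ℕ in Filter.atTop,
        1 - 1 / (3 * 2 ^ m' * (deltaNat P : ℝ)) < sparseRatio (Amat P m') k t :=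
      hT.eventually_const_lt hlt
    have hev2 : ∀ᶠ t : ℕ in Filter.atTop,
        sparseRatio (Amat P m') k t ≤ 1 - 1 / (3 * 2 ^ m' * (deltaNat P : ℝ)) := by
      filter_upwards [Filter.eventually_ge_atTop (max 1 (deltaNat P))] with t ht
      exact sparseRatio_le_one_sub P hP hPinj hd0 k t hk
        (le_trans (le_max_left _ _) ht) (le_trans (le_max_right _ _) ht)
    obtain ⟨t, h1, h2⟩ := (hev1.and hev2).exists
    linarith
  refine ⟨Amat P m', rank_Amat P hP hPinj hd0, phiMax_Amat P hP hd0, hTend, ?_, ?_⟩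
  · rw [show m' + 1 + d - 1 = m' + d from by omega]
    exact hnotk (m' + d) le_rfl
  · unfold sigmaAsy
    apply le_antisymm
    · exact Nat.sInf_le hTend
    · apply le_csInf ⟨m' + 1 + d, hTend⟩
      intro k hkT
      by_contra hlt2
      push_neg at hlt2
      exact hnotk k (by omega) hkT
end

section
/- Let v^1, …, v^m ∈ ℤ^m be linearly independent vectors and K := cone({v^1, …, v^m}). For every t ≥ 0 and all x^1, …, x^t ∈ ℤ^m, there exist k_1, …, k_m ∈ ℤ_{≥0} such that the point z := Σ_{i=1}^m k_i v^i satisfies K + z ⊆ K ∩ ⋂_{i=1}^t (K + x^i). -/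
/-- The cone generated by a finite family of integer vectors, as a subset of `ℝ^m`. -/
def coneFam {m k : ℕ} (v : Fin k → (Fin m → ℤ)) : Set (Fin m → ℝ) :=
  {y | ∃ c : Fin k → ℝ, (∀ i, 0 ≤ c i) ∧ y = ∑ i, c i • fun j => (v i j : ℝ)}

theorem exists_translate_in_intersection {m : ℕ} (v : Fin m → (Fin m → ℤ))
    (hv : LinearIndependent ℝ fun i => fun j => ((v i j : ℝ)))
    (t : ℕ) (x : Fin t → (Fin m → ℤ)) :
    ∃ k : Fin m → ℕ,
      ((fun w => w + fun j => ((∑ i, (k i : ℤ) • v i) j : ℝ)) '' coneFam v) ⊆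
        coneFam v ∩ ⋂ i : Fin t, ((fun w => w + fun j => ((x i j : ℝ))) '' coneFam v) := by
  classical
  set V : Fin m → (Fin m → ℝ) := fun i => fun j => (v i j : ℝ) with hVdef
  have hcard : Fintype.card (Fin m) = Module.finrank ℝ (Fin m → ℝ) := by
    simp [Module.finrank_fintype_fun_eq_card]
  let B : Module.Basis (Fin m) ℝ (Fin m → ℝ) :=
    Module.Basis.mk hv (hv.span_eq_top_of_card_eq_finrank' hcard).ge
  have hB : ∀ i, B i = V i := fun i => Module.Basis.mk_apply _ _ _
  let X : Fin t → (Fin m → ℝ) := fun i => fun j => (x i j : ℝ)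
  let c : Fin t → Fin m → ℝ := fun i j => B.repr (X i) j
  refine ⟨fun j => Finset.univ.sup fun i => ⌈c i j⌉₊, ?_⟩
  set k : Fin m → ℕ := fun j => Finset.univ.sup fun i => ⌈c i j⌉₊ with hkdef
  have hk : ∀ i j, c i j ≤ (k j : ℝ) := by
    intro i j
    calc c i j ≤ (⌈c i j⌉₊ : ℝ) := Nat.le_ceil _
    _ ≤ (k j : ℝ) := by
        exact_mod_cast Nat.cast_le.mpr (Finset.le_sup (f := fun i => ⌈c i j⌉₊) (Finset.mem_univ i))
  have hz : (fun j => ((∑ i, (k i : ℤ) • v i) j : ℝ)) = ∑ j, (k j : ℝ) • V j := by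
    funext j
    simp [Finset.sum_apply, V]
  have hX : ∀ i : Fin t, X i = ∑ j, c i j • V j := by
    intro i
    have := B.sum_repr (X i)
    simp only [hB] at this
    exact this.symm
  rintro y ⟨w, hw, rfl⟩
  obtain ⟨a, ha, rfl⟩ := hw
  constructor
  · refine ⟨fun j => a j + (k j : ℝ), fun j => by exact add_nonneg (ha j) (Nat.cast_nonneg _), ?_⟩
    show (∑ i, a i • V i) + (fun j => ((∑ i, (k i : ℤ) • v i) j : ℝ))
        = ∑ i, (a i + (k i : ℝ)) • V i
    rw [hz, ← Finset.sum_add_distrib]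
    exact Finset.sum_congr rfl fun j _ => (add_smul _ _ _).symm
  · rw [Set.mem_iInter]
    intro i
    refine ⟨∑ j, (a j + ((k j : ℝ) - c i j)) • V j, ⟨fun j => a j + ((k j : ℝ) - c i j),
      fun j => by dsimp only; have := hk i j; have := ha j; linarith, rfl⟩, ?_⟩
    show (∑ j, (a j + ((k j : ℝ) - c i j)) • V j) + X i
        = (∑ i, a i • V i) + (fun j => ((∑ i, (k i : ℤ) • v i) j : ℝ))
    rw [hz, hX i, ← Finset.sum_add_distrib, ← Finset.sum_add_distrib]
    refine Finset.sum_congr rfl fun j _ => ?_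
    rw [← add_smul, ← add_smul]
    congr 1
    ring
end

section
/- Let v^1, …, v^m ∈ ℤ^m be linearly independent vectors and K := cone({v^1, …, v^m}). Then for all x, y ∈ ℤ^m, the set K ∩ (K + x) ∩ (K + y) is nonempty. -/
theorem cone_inter_two_translates_nonempty {m : ℕ} (v : Fin m → (Fin m → ℤ))
    (hv : LinearIndependent ℝ fun i => fun j => ((v i j : ℝ)))
    (x y : Fin m → ℤ) :
    (coneFam v ∩ ((fun w => w + fun j => ((x j : ℝ))) '' coneFam v) ∩
      ((fun w => w + fun j => ((y j : ℝ))) '' coneFam v)).Nonempty := by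
  classical
  rcases Nat.eq_zero_or_pos m with hm | hm
  · subst hm
    refine ⟨0, ⟨⟨0, fun i => le_refl _, by simp⟩, ?_⟩, ?_⟩
    · exact ⟨0, ⟨0, fun i => le_refl _, by simp⟩, Subsingleton.elim _ _⟩
    · exact ⟨0, ⟨0, fun i => le_refl _, by simp⟩, Subsingleton.elim _ _⟩
  have : Nonempty (Fin m) := ⟨⟨0, hm⟩⟩
  set f : Fin m → (Fin m → ℝ) := fun i => fun j => ((v i j : ℝ)) with hf
  have hcard : Fintype.card (Fin m) = Module.finrank ℝ (Fin m → ℝ) := by simp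
  let B := basisOfLinearIndependentOfCardEqFinrank hv hcard
  have hB : ∀ i, B i = f i := fun i => by
    simp [B, coe_basisOfLinearIndependentOfCardEqFinrank]
  set xR : Fin m → ℝ := fun j => (x j : ℝ) with hxR
  set yR : Fin m → ℝ := fun j => (y j : ℝ) with hyR
  set a : Fin m → ℝ := fun i => B.repr xR i with ha
  set b : Fin m → ℝ := fun i => B.repr yR i with hb
  set c : Fin m → ℝ := fun i => max (max (a i) (b i)) 0 with hc
  have hx : ∑ i, a i • f i = xR := by
    have h := B.sum_repr xR
    simp only [hB] at h
    exact h
  have hy : ∑ i, b i • f i = yR := by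
    have h := B.sum_repr yR
    simp only [hB] at h
    exact h
  have key : ∀ d : Fin m → ℝ, ∑ i, (c i - d i) • f i + ∑ i, d i • f i = ∑ i, c i • f i := by
    intro d
    rw [← Finset.sum_add_distrib]
    simp [sub_smul]
  refine ⟨∑ i, c i • f i, ⟨⟨c, fun i => le_max_right _ _, rfl⟩, ?_⟩, ?_⟩
  · refine ⟨∑ i, (c i - a i) • f i,
      ⟨fun i => c i - a i,
        fun i => sub_nonneg.mpr (le_max_of_le_left (le_max_left _ _)), rfl⟩, ?_⟩
    rw [← hx]
    exact key a
  · refine ⟨∑ i, (c i - b i) • f i,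
      ⟨fun i => c i - b i,
        fun i => sub_nonneg.mpr (le_max_of_le_left (le_max_right _ _)), rfl⟩, ?_⟩
    rw [← hy]
    exact key b
end

section
/- Let A ∈ ℤ^{m×n} have full row rank and let W' be an invertible m×m matrix whose columns are columns of A. Then there exist k_1, …, k_m ∈ ℤ_{≥0} such that the point z := W'k (a nonnegative integer combination of the columns of W') satisfies: for every b ∈ (cone(W') + z) ∩ ℤ^m, either P(A,b) = ∅ or σ(A,b) ≤ m + Ω(|det W'|). -/
lemma bigOmega_pos {t : ℕ} (ht : 2 ≤ t) : 1 ≤ bigOmega t := by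
  rcases Nat.lt_or_ge 0 (bigOmega t) with h | h
  · exact h
  · exfalso
    have h0 : bigOmega t = 0 := by omega
    have : t.primeFactorsList = [] := List.length_eq_zero_iff.mp h0
    have := (Nat.primeFactorsList_eq_nil t).mp this
    omega

lemma bigOmega_lt_of_dvd_of_lt {a b : ℕ} (h : a ∣ b) (hab : a < b) (hb : b ≠ 0) :
    bigOmega a < bigOmega b := by
  obtain ⟨c, rfl⟩ := h
  have ha : a ≠ 0 := by rintro rfl; simp at hab
  have hc : c ≠ 0 := by rintro rfl; simp at hb
  have hc2 : 2 ≤ c := by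
    rcases Nat.lt_or_ge c 2 with h2 | h2
    · interval_cases c <;> omega
    · exact h2
  rw [bigOmega_mul ha hc]
  have := bigOmega_pos hc2
  omega

lemma addSubgroup_card_lt {G : Type*} [AddCommGroup G] [Finite G] {H K : AddSubgroup G}
    (h : H < K) : Nat.card H < Nat.card K := by
  have hsub : (H : Set G) ⊂ (K : Set G) := by
    exact_mod_cast h
  have := Set.ncard_lt_ncard hsub (Set.toFinite _)
  rw [← Nat.card_coe_set_eq, ← Nat.card_coe_set_eq] at this
  exact this

lemma chain_le_bigOmega {G : Type*} [AddCommGroup G] [Finite G] (H : ℕ → AddSubgroup G)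
    (s : ℕ) (hchain : ∀ i < s, H i < H (i + 1)) : s ≤ bigOmega (Nat.card G) := by
  have key : ∀ i, i ≤ s → i ≤ bigOmega (Nat.card (H i)) := by
    intro i
    induction i with
    | zero => intro _; omega
    | succ i ih =>
      intro hi
      have h1 := ih (by omega)
      have hlt := hchain i (by omega)
      have hdvd : Nat.card (H i) ∣ Nat.card (H (i + 1)) :=
        AddSubgroup.card_dvd_of_le hlt.le
      have hcard := addSubgroup_card_lt hlt
      have hb : Nat.card (H (i + 1)) ≠ 0 := Nat.card_pos.ne'
      have := bigOmega_lt_of_dvd_of_lt hdvd hcard hb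
      omega
  have h1 := key s le_rfl
  have h2 : bigOmega (Nat.card (H s)) ≤ bigOmega (Nat.card G) :=
    bigOmega_le_of_dvd (AddSubgroup.card_addSubgroup_dvd_card _) Nat.card_pos.ne'
  omega

lemma mem_closure_exists_nsmul {G : Type*} [AddCommGroup G] [Finite G] {ι : Type*} [Fintype ι]
    (v : ι → G) (x : G) (hx : x ∈ AddSubgroup.closure (Set.range v)) :
    ∃ c : ι → ℕ, ∑ i, c i • v i = x := by
  classical
  have hmon : x ∈ AddSubmonoid.closure (Set.range v) := by
    let K : AddSubgroup G :=
      { toAddSubmonoid := AddSubmonoid.closure (Set.range v)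
        neg_mem' := by
          intro y hy
          have hcard : Nat.card G • y = 0 := card_nsmul_eq_zero'
          have hpos : 1 ≤ Nat.card G := Nat.card_pos
          have heq : -y = (Nat.card G - 1) • y := by
            have h0 : y + (Nat.card G - 1) • y = 0 := by
              have h1 : (1 + (Nat.card G - 1)) • y = 0 := by
                rw [show 1 + (Nat.card G - 1) = Nat.card G by omega]; exact hcard
              simpa [add_smul] using h1
            exact neg_eq_of_add_eq_zero_right h0
          rw [heq]
          exact nsmul_mem (show y ∈ AddSubmonoid.closure (Set.range v) from hy) _ }
    exact (AddSubgroup.closure_le K).mpr AddSubmonoid.subset_closure hx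
  clear hx
  induction hmon using AddSubmonoid.closure_induction with
  | mem y hy =>
    obtain ⟨i, rfl⟩ := hy
    refine ⟨Pi.single i 1, ?_⟩
    rw [Finset.sum_eq_single i] <;> simp +contextual [Pi.single_apply]
  | zero => exact ⟨0, by simp⟩
  | add y z hy hz ihy ihz =>
    obtain ⟨cy, hcy⟩ := ihy
    obtain ⟨cz, hcz⟩ := ihz
    exact ⟨cy + cz, by simp [add_smul, Finset.sum_add_distrib, hcy, hcz]⟩

lemma mulVecLin_injective_of_det_ne_zero {m : ℕ} (W : Matrix (Fin m) (Fin m) ℤ)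
    (hdet : W.det ≠ 0) : Function.Injective W.mulVecLin := by
  intro x y hxy
  simp only [Matrix.mulVecLin_apply] at hxy
  have h := congrArg (W.adjugate.mulVec ·) hxy
  simp only [Matrix.mulVec_mulVec, Matrix.adjugate_mul, Matrix.smul_mulVec,
    Matrix.one_mulVec] at h
  funext i
  have h2 := congrFun h i
  simp only [Pi.smul_apply, smul_eq_mul] at h2
  exact mul_left_cancel₀ hdet h2

lemma card_quotient_eq_natAbs_det {m : ℕ} (W : Matrix (Fin m) (Fin m) ℤ) (hdet : W.det ≠ 0) :
    Nat.card ((Fin m → ℤ) ⧸ LinearMap.range W.mulVecLin) = W.det.natAbs := by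
  classical
  set Λ : Submodule ℤ (Fin m → ℤ) := LinearMap.range W.mulVecLin with hΛ
  have hinj := mulVecLin_injective_of_det_ne_zero W hdet
  let e1 : (Fin m → ℤ) ≃ₗ[ℤ] Λ := LinearEquiv.ofInjective _ hinj
  obtain ⟨n', snf⟩ := Λ.smithNormalForm (Pi.basisFun ℤ (Fin m))
  obtain ⟨bM, bN, f, a, hsnf⟩ := snf
  have hn : n' = m := by
    have h1 : Module.finrank ℤ Λ = n' := by
      rw [Module.finrank_eq_card_basis bN]; simp
    have h2 : Module.finrank ℤ Λ = m := by
      rw [← e1.finrank_eq, Module.finrank_pi]; simp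
    omega
  subst hn
  have hfbij : Function.Bijective f := Finite.injective_iff_bijective.mp f.injective
  let gE := (Equiv.ofBijective f hfbij).symm
  let e2 := bM.equiv bN gE
  have he2mat : (LinearMap.toMatrix bM bM (Λ.subtype.comp (e2 : _ →ₗ[ℤ] _))) =
      Matrix.diagonal (fun i => a (gE i)) := by
    ext i j
    rw [LinearMap.toMatrix_apply]
    have hfg : f (gE j) = j := (Equiv.ofBijective f hfbij).apply_symm_apply j
    have happ : (Λ.subtype.comp (e2 : _ →ₗ[ℤ] _)) (bM j) = a (gE j) • bM j := by
      simp only [LinearMap.comp_apply, LinearEquiv.coe_coe, e2, Module.Basis.equiv_apply,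
        Submodule.coe_subtype]
      rw [hsnf (gE j), hfg]
    rw [happ, map_smul, Module.Basis.repr_self]
    by_cases hij : i = j
    · subst hij; simp
    · simp [Matrix.diagonal_apply_ne _ hij, Finsupp.single_apply, Ne.symm hij]
  have hdet2 : LinearMap.det (Λ.subtype.comp (e2 : _ →ₗ[ℤ] _)) = ∏ i, a (gE i) := by
    rw [← LinearMap.det_toMatrix bM, he2mat, Matrix.det_diagonal]
  have hdet1 : LinearMap.det (Λ.subtype.comp (e1 : _ →ₗ[ℤ] _)) = W.det := by
    have hcomp : Λ.subtype.comp (e1 : _ →ₗ[ℤ] _) = W.mulVecLin := by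
      ext x; rfl
    rw [hcomp, ← Matrix.toLin'_apply', LinearMap.det_toLin']
  have hass : Associated (LinearMap.det (Λ.subtype.comp (e1 : _ →ₗ[ℤ] _)))
      (LinearMap.det (Λ.subtype.comp (e2 : _ →ₗ[ℤ] _))) :=
    LinearMap.associated_det_comp_equiv _ _ _
  have hnatAbs : W.det.natAbs = (∏ i, a (gE i)).natAbs := by
    rw [← hdet1, ← hdet2]; exact Int.natAbs_eq_iff_associated.mpr hass
  have hidx := Module.Basis.SmithNormalForm.toAddSubgroup_index_eq_pow_mul_prod
      (⟨bM, bN, f, a, hsnf⟩ : Module.Basis.SmithNormalForm Λ _ _)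
  have hNatCardZ : Nat.card ℤ = 0 := Nat.card_eq_zero_of_infinite
  have hcard : Nat.card ((Fin _ → ℤ) ⧸ Λ) = Λ.toAddSubgroup.index := rfl
  rw [hcard, hidx, hNatCardZ]
  simp only [Fintype.card_fin, Nat.sub_self, pow_zero, one_mul]
  have hspan : ∀ i, (Ideal.span {a i}).toAddSubgroup.index = (a i).natAbs := by
    intro i
    rw [Ideal.span_singleton_toAddSubgroup_eq_zmultiples, Int.index_zmultiples]
  rw [Finset.prod_congr rfl (fun i _ => hspan i), hnatAbs]
  rw [show (∏ i, a (gE i)).natAbs = ∏ i, (a (gE i)).natAbs from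
    map_prod Int.natAbsHom _ Finset.univ]
  exact (Equiv.prod_comp gE (fun i => (a i).natAbs)).symm

lemma min_support_le_bigOmega {n : ℕ} {G : Type*} [AddCommGroup G] [Finite G]
    (φ : (Fin n → ℤ) →ₗ[ℤ] G) (u : Fin n → ℤ) (hu : ∀ j, 0 ≤ u j)
    (hmin : ∀ u' : Fin n → ℤ, (∀ j, 0 ≤ u' j) → φ u' = φ u →
      {j | u j ≠ 0}.ncard ≤ {j | u' j ≠ 0}.ncard) :
    {j | u j ≠ 0}.ncard ≤ bigOmega (Nat.card G) := by
  classical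
  set F : Finset (Fin n) := Finset.univ.filter (fun j => u j ≠ 0) with hF
  have hscard : {j | u j ≠ 0}.ncard = F.card := by
    rw [show {j | u j ≠ 0} = ↑F by ext j; simp [hF], Set.ncard_coe_finset]
  set s := F.card with hs
  let e : Fin s ≃ {x // x ∈ F} := F.equivFin.symm
  let ε : Fin s → Fin n := fun l => (e l : Fin n)
  have hεinj : Function.Injective ε := fun l1 l2 h => e.injective (Subtype.ext h)
  have hεmem : ∀ l, u (ε l) ≠ 0 := fun l => by
    have h := (e l).2
    simp only [hF, Finset.mem_filter, Finset.mem_univ, true_and] at h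
    exact h
  have hεF : ∀ l, u (ε l) ≠ 0 := hεmem
  let w : Fin s → G := fun l => φ (Pi.single (ε l) (u (ε l)))
  let H : ℕ → AddSubgroup G := fun i => AddSubgroup.closure (w '' {l | (l : ℕ) < i})
  have hchain : ∀ i < s, H i < H (i + 1) := by
    intro i hi
    have hle : H i ≤ H (i + 1) := AddSubgroup.closure_mono (Set.image_mono (fun l hl => by
      simp only [Set.mem_setOf_eq] at *; omega))
    refine lt_of_le_of_ne hle (fun heq => ?_)
    set li : Fin s := ⟨i, hi⟩ with hli
    have hwmem : w li ∈ H (i + 1) :=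
      AddSubgroup.subset_closure ⟨li, by simp [hli], rfl⟩
    rw [← heq] at hwmem
    have himg : w '' {l | (l : ℕ) < i} =
        Set.range (fun x : {l : Fin s // (l : ℕ) < i} => w x.1) := by
      rw [Set.image_eq_range]
      rfl
    obtain ⟨c, hc⟩ := mem_closure_exists_nsmul
      (fun x : {l : Fin s // (l : ℕ) < i} => w x.1) (w li) (by rw [← himg]; exact hwmem)
    set u' : Fin n → ℤ := u - Pi.single (ε li) (u (ε li)) +
      ∑ x : {l : Fin s // (l : ℕ) < i}, Pi.single (ε x.1) ((c x : ℤ) * u (ε x.1)) with hu'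
    have hεne : ∀ x : {l : Fin s // (l : ℕ) < i}, ε x.1 ≠ ε li := by
      intro x hx
      have h1 := hεinj hx
      have h2 : (x.1 : ℕ) = i := congrArg Fin.val h1
      have := x.2
      omega
    have hsumat : ∀ j, j ≠ ε li → (∀ x : {l : Fin s // (l : ℕ) < i}, j ≠ ε x.1) →
        u' j = u j := by
      intro j hjli hjx
      simp only [hu', Pi.add_apply, Pi.sub_apply, Finset.sum_apply]
      have hz : ∑ x : {l : Fin s // (l : ℕ) < i},
          (Pi.single (ε x.1) ((c x : ℤ) * u (ε x.1)) : Fin n → ℤ) j = 0 :=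
        Finset.sum_eq_zero fun x _ => Pi.single_eq_of_ne (hjx x) _
      rw [Pi.single_eq_of_ne hjli, hz]
      ring
    have hu'li : u' (ε li) = 0 := by
      simp only [hu', Pi.add_apply, Pi.sub_apply, Finset.sum_apply]
      have hz : ∑ x : {l : Fin s // (l : ℕ) < i},
          (Pi.single (ε x.1) ((c x : ℤ) * u (ε x.1)) : Fin n → ℤ) (ε li) = 0 :=
        Finset.sum_eq_zero fun x _ => Pi.single_eq_of_ne (Ne.symm (hεne x)) _
      rw [Pi.single_eq_same, hz]
      ring
    have hu'0 : ∀ j, 0 ≤ u' j := by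
      intro j
      by_cases hj : j = ε li
      · rw [hj, hu'li]
      · simp only [hu', Pi.add_apply, Pi.sub_apply, Finset.sum_apply]
        rw [Pi.single_eq_of_ne hj]
        have hterm : ∀ x : {l : Fin s // (l : ℕ) < i},
            0 ≤ (Pi.single (ε x.1) ((c x : ℤ) * u (ε x.1)) : Fin n → ℤ) j := by
          intro x
          rcases eq_or_ne j (ε x.1) with h | h
          · rw [h, Pi.single_eq_same]
            exact mul_nonneg (Int.natCast_nonneg _) (hu _)
          · rw [Pi.single_eq_of_ne h]
        have hnn : 0 ≤ ∑ x : {l : Fin s // (l : ℕ) < i},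
            (Pi.single (ε x.1) ((c x : ℤ) * u (ε x.1)) : Fin n → ℤ) j :=
          Finset.sum_nonneg (fun x _ => hterm x)
        have := hu j
        omega
    have hφu' : φ u' = φ u := by
      have h2 : ∀ x : {l : Fin s // (l : ℕ) < i},
          φ (Pi.single (ε x.1) ((c x : ℤ) * u (ε x.1))) = (c x : ℤ) • w x.1 := by
        intro x
        rw [show ((c x : ℤ) * u (ε x.1)) = (c x : ℤ) • u (ε x.1) from rfl,
          Pi.single_smul' (ε x.1) ((c x : ℤ)) (u (ε x.1)), map_smul]
      simp only [hu', map_add, map_sub, map_sum, h2]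
      have h3 : ∑ x : {l : Fin s // (l : ℕ) < i}, (c x : ℤ) • w x.1 = w li := by
        rw [← hc]
        exact Finset.sum_congr rfl (fun x _ => natCast_zsmul _ _)
      rw [h3]
      show φ u - w li + w li = φ u
      abel
    have hsupp : {j | u' j ≠ 0} ⊆ {j | u j ≠ 0} \ {ε li} := by
      intro j hj
      simp only [Set.mem_setOf_eq] at hj
      have hjli : j ≠ ε li := by
        intro h; rw [h, hu'li] at hj; exact hj rfl
      refine ⟨?_, hjli⟩
      simp only [Set.mem_setOf_eq]
      intro hj0
      have hjx : ∀ x : {l : Fin s // (l : ℕ) < i}, j ≠ ε x.1 := by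
        intro x h
        exact hεmem x.1 (by rw [← h]; exact hj0)
      rw [hsumat j hjli hjx, hj0] at hj
      exact hj rfl
    have hlt : {j | u' j ≠ 0}.ncard < {j | u j ≠ 0}.ncard := by
      have h1 : {j | u' j ≠ 0}.ncard ≤ ({j | u j ≠ 0} \ {ε li}).ncard :=
        Set.ncard_le_ncard hsupp (Set.toFinite _)
      have h2 : ({j | u j ≠ 0} \ {ε li}).ncard < {j | u j ≠ 0}.ncard :=
        Set.ncard_diff_singleton_lt_of_mem (hεmem li) (Set.toFinite _)
      omega
    have := hmin u' hu'0 hφu'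
    omega
  rw [hscard]
  exact chain_le_bigOmega H s hchain

lemma cast_mulVec {a b : ℕ} (M : Matrix (Fin a) (Fin b) ℤ) (v : Fin b → ℤ) :
    (fun i => ((M.mulVec v) i : ℝ)) = (M.map (Int.cast : ℤ → ℝ)).mulVec (fun j => (v j : ℝ)) := by
  funext i
  simp only [Matrix.mulVec, dotProduct, Matrix.map_apply]
  push_cast
  rfl



theorem exists_translated_subcone_with_small_support {m n : ℕ}
    (A : Matrix (Fin m) (Fin n) ℤ) (hrank : A.rank = m)
    (W' : Matrix (Fin m) (Fin m) ℤ) (hdet : W'.det ≠ 0)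
    (hsub : ∀ j : Fin m, ∃ j' : Fin n, (fun i => W' i j) = fun i => A i j') :
    ∃ k : Fin m → ℕ,
      ∀ b : Fin m → ℤ,
        (fun i => (b i : ℝ)) ∈
          (fun y => y + fun i => ((W'.mulVec fun j => (k j : ℤ)) i : ℝ)) '' coneOf W' →
        (¬ ∃ x : Fin n → ℤ, (∀ j, 0 ≤ x j) ∧ A.mulVec x = b) ∨
          sigmaFn A b ≤ ((m + bigOmega W'.det.natAbs : ℕ) : ℕ∞) := by
  classical
  set Λ : Submodule ℤ (Fin m → ℤ) := LinearMap.range W'.mulVecLin with hΛ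
  set G := (Fin m → ℤ) ⧸ Λ with hG
  have hd0 : W'.det.natAbs ≠ 0 := Int.natAbs_ne_zero.mpr hdet
  have hcardG : Nat.card G = W'.det.natAbs := card_quotient_eq_natAbs_det W' hdet
  have hfinG : Finite G := Nat.finite_of_card_ne_zero (by rw [hcardG]; exact hd0)
  letI : Fintype G := Fintype.ofFinite G
  set π : (Fin m → ℤ) →ₗ[ℤ] G := Λ.mkQ with hπ
  set φ : (Fin n → ℤ) →ₗ[ℤ] G := π.comp A.mulVecLin with hφ
  -- minimal support representatives
  have hUg : ∀ g : G, ∃ u : Fin n → ℤ, (∃ u0 : Fin n → ℤ, (∀ j, 0 ≤ u0 j) ∧ φ u0 = g) →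
      ((∀ j, 0 ≤ u j) ∧ φ u = g ∧ {j | u j ≠ 0}.ncard ≤ bigOmega W'.det.natAbs) := by
    intro g
    by_cases hg : ∃ u0 : Fin n → ℤ, (∀ j, 0 ≤ u0 j) ∧ φ u0 = g
    · obtain ⟨u0, hu00, hu0g⟩ := hg
      have hP : ∃ kk : ℕ, ∃ u : Fin n → ℤ, ((∀ j, 0 ≤ u j) ∧ φ u = g) ∧
          {j | u j ≠ 0}.ncard = kk := ⟨_, u0, ⟨hu00, hu0g⟩, rfl⟩
      obtain ⟨u, ⟨hu0, hug⟩, hk⟩ := Nat.find_spec hP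
      refine ⟨u, fun _ => ⟨hu0, hug, ?_⟩⟩
      have hmin : ∀ u' : Fin n → ℤ, (∀ j, 0 ≤ u' j) → φ u' = φ u →
          {j | u j ≠ 0}.ncard ≤ {j | u' j ≠ 0}.ncard := by
        intro u' h0 hφ'
        rw [hk]
        exact Nat.find_min' hP ⟨u', ⟨h0, by rw [hφ', hug]⟩, rfl⟩
      have hb := min_support_le_bigOmega φ u hu0 hmin
      rwa [hcardG] at hb
    · exact ⟨0, fun h => absurd h hg⟩
  choose U hU using hUg
  set Wr : Matrix (Fin m) (Fin m) ℝ := W'.map (Int.cast : ℤ → ℝ) with hWr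
  have hWrdet : Wr.det ≠ 0 := by
    have hmd := RingHom.map_det (Int.castRingHom ℝ) W'
    simp only [RingHom.mapMatrix_apply, Int.coe_castRingHom] at hmd
    rw [hWr, ← hmd]
    exact_mod_cast hdet
  have hWrinv : ∀ v : Fin m → ℝ, Wr⁻¹.mulVec (Wr.mulVec v) = v := by
    intro v
    rw [Matrix.mulVec_mulVec, Matrix.nonsing_inv_mul Wr (isUnit_iff_ne_zero.mpr hWrdet),
      Matrix.one_mulVec]
  have hWrid : ∀ v : Fin m → ℝ, Wr.mulVec (Wr⁻¹.mulVec v) = v := by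
    intro v
    rw [Matrix.mulVec_mulVec, Matrix.mul_nonsing_inv Wr (isUnit_iff_ne_zero.mpr hWrdet),
      Matrix.one_mulVec]
  set r : G → Fin m → ℝ := fun g => Wr⁻¹.mulVec (fun i => ((A.mulVec (U g)) i : ℝ)) with hr
  refine ⟨fun i => Finset.univ.sup (fun g : G => ⌈r g i⌉₊), ?_⟩
  set k : Fin m → ℕ := fun i => Finset.univ.sup (fun g : G => ⌈r g i⌉₊) with hkdef
  intro b hb
  by_cases hsol : ∃ x : Fin n → ℤ, (∀ j, 0 ≤ x j) ∧ A.mulVec x = b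
  swap
  · exact Or.inl hsol
  right
  obtain ⟨x, hx0, hxb⟩ := hsol
  set g : G := π b with hgdef
  have hrepg : ∃ u0 : Fin n → ℤ, (∀ j, 0 ≤ u0 j) ∧ φ u0 = g := by
    refine ⟨x, hx0, ?_⟩
    show π (A.mulVecLin x) = π b
    rw [Matrix.mulVecLin_apply, hxb]
  obtain ⟨hu0, hug, hUsupp⟩ := hU g hrepg
  set u : Fin n → ℤ := U g with hudef
  have hmem : b - A.mulVec u ∈ Λ := by
    have h0 : π (b - A.mulVec u) = 0 := by
      rw [map_sub]
      have h1 : π (A.mulVec u) = g := by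
        have := hug
        rwa [hφ, LinearMap.comp_apply, Matrix.mulVecLin_apply] at this
      rw [h1, hgdef, sub_self]
    have h2 : Λ.mkQ (b - A.mulVec u) = 0 := h0
    rwa [Submodule.mkQ_apply, Submodule.Quotient.mk_eq_zero] at h2
  obtain ⟨q, hq⟩ := hmem
  rw [Matrix.mulVecLin_apply] at hq
  -- real arithmetic: q is nonnegative
  obtain ⟨y, ⟨c, hc0, hyc⟩, hby⟩ := hb
  have hyW : y = Wr.mulVec c := by
    rw [hyc]
    funext i
    simp only [Finset.sum_apply, Pi.smul_apply, smul_eq_mul, Matrix.mulVec, dotProduct,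
      Matrix.map_apply, hWr]
    exact Finset.sum_congr rfl fun j _ => mul_comm _ _
  have hzW : (fun i => ((W'.mulVec fun j => ((k j : ℤ))) i : ℝ)) =
      Wr.mulVec (fun j => (k j : ℝ)) := by
    rw [cast_mulVec]
    simp [hWr]
  have hbR : (fun i => (b i : ℝ)) = Wr.mulVec (c + fun j => (k j : ℝ)) := by
    rw [Matrix.mulVec_add, ← hby, hyW, hzW]
  have hAuR : (fun i => ((A.mulVec u) i : ℝ)) = Wr.mulVec (r g) := by
    rw [hr, hWrid]
  have hqR : (fun i => (q i : ℝ)) = (c + fun j => (k j : ℝ)) - r g := by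
    have h1 : Wr.mulVec (fun i => (q i : ℝ)) =
        Wr.mulVec ((c + fun j => (k j : ℝ)) - r g) := by
      rw [← cast_mulVec]
      rw [Matrix.mulVec_sub, ← hbR, ← hAuR]
      funext i
      have := congrFun hq i
      simp only [Pi.sub_apply] at this ⊢
      rw [this]
      push_cast
      ring
    have h2 := congrArg (Wr⁻¹.mulVec ·) h1
    simpa only [hWrinv] using h2
  have hq0 : ∀ i, 0 ≤ q i := by
    intro i
    have h1 := congrFun hqR i
    have h2' : ⌈r g i⌉₊ ≤ k i := Finset.le_sup (f := fun g : G => ⌈r g i⌉₊) (Finset.mem_univ g)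
    have h2 : r g i ≤ (k i : ℝ) := le_trans (Nat.le_ceil _) (by exact_mod_cast h2')
    have h3 := hc0 i
    simp only [Pi.sub_apply, Pi.add_apply] at h1
    have : (0 : ℝ) ≤ (q i : ℝ) := by rw [h1]; linarith
    exact_mod_cast this
  -- the W'-columns inside A
  choose j' hj' using hsub
  have hj'inj : Function.Injective j' := by
    intro i1 i2 h12
    by_contra hne
    apply hdet
    apply Matrix.det_zero_of_column_eq hne
    intro row
    have e1 := congrFun (hj' i1) row
    have e2 := congrFun (hj' i2) row
    rw [e1, e2, h12]
  set xs : Fin n → ℤ := u + ∑ i : Fin m, Pi.single (j' i) (q i) with hxs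
  have hxs0 : ∀ j, 0 ≤ xs j := by
    intro j
    simp only [hxs, Pi.add_apply, Finset.sum_apply]
    have h1 : 0 ≤ ∑ i : Fin m, (Pi.single (j' i) (q i) : Fin n → ℤ) j := by
      refine Finset.sum_nonneg fun i _ => ?_
      rcases eq_or_ne j (j' i) with h | h
      · rw [h, Pi.single_eq_same]; exact hq0 i
      · rw [Pi.single_eq_of_ne h]
    have := hu0 j
    omega
  have hAxs : A.mulVec xs = b := by
    have h1 : A.mulVecLin xs = A.mulVecLin u + ∑ i : Fin m, A.mulVecLin (Pi.single (j' i) (q i)) := by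
      rw [hxs, map_add, map_sum]
    have h2 : ∀ i : Fin m, A.mulVecLin (Pi.single (j' i) (q i)) = fun row => W' row i * q i := by
      intro i
      rw [Matrix.mulVecLin_apply, Matrix.mulVec_single]
      funext row
      simp only [Pi.smul_apply, Matrix.col_apply, op_smul_eq_mul]
      rw [← congrFun (hj' i) row]
    have h3 : ∑ i : Fin m, (fun row => W' row i * q i) = W'.mulVec q := by
      funext row
      rw [Finset.sum_apply]
      rfl
    show A.mulVecLin xs = b
    rw [h1, Finset.sum_congr rfl (fun i _ => h2 i), h3, Matrix.mulVecLin_apply, hq]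
    abel
  have hsupp : {j | xs j ≠ 0} ⊆ {j | u j ≠ 0} ∪ Set.range j' := by
    intro j hj
    simp only [Set.mem_setOf_eq] at hj
    rcases em (j ∈ Set.range j') with h | h
    · exact Or.inr h
    · left
      simp only [Set.mem_setOf_eq]
      intro hu0j
      apply hj
      simp only [hxs, Pi.add_apply, Finset.sum_apply, hu0j]
      rw [Finset.sum_eq_zero]
      · ring
      · intro i _
        exact Pi.single_eq_of_ne (fun hh => h ⟨i, hh.symm⟩) _
  have hcount : {j | xs j ≠ 0}.ncard ≤ m + bigOmega W'.det.natAbs := by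
    have h1 := Set.ncard_le_ncard hsupp (Set.toFinite _)
    have h2 := Set.ncard_union_le {j | u j ≠ 0} (Set.range j')
    have h3 : (Set.range j').ncard ≤ m := by
      rw [← Set.image_univ]
      refine le_trans (Set.ncard_image_le (Set.toFinite _)) ?_
      simp [Set.ncard_univ]
    omega
  have hmemS : ((({j | xs j ≠ 0}.ncard : ℕ∞)) ∈ {kk : ℕ∞ | ∃ x : Fin n → ℤ,
      (∀ j, 0 ≤ x j) ∧ A.mulVec x = b ∧ (Set.ncard {j | x j ≠ 0} : ℕ∞) = kk}) :=
    ⟨xs, hxs0, hAxs, rfl⟩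
  refine le_trans (sInf_le hmemS) ?_
  exact_mod_cast Nat.cast_le.mpr hcount
end

section
/- Let d ≥ 1, let p_1 < … < p_d be primes, let δ := p_1⋯p_d and q_i := δ/p_i for each i, and let Ã := (q_1, …, q_d, −δ) ∈ ℤ^{1×(d+1)}. If b ∈ ℤ satisfies b < 0 and b ≡ 1 (mod δ), then P(Ã,b) ≠ ∅ and σ(Ã,b) = 1 + d; that is, b is expressible as a nonnegative integer combination of q_1, …, q_d, −δ, and every such expression uses all d + 1 of these numbers with positive coefficients. -/
open Finset

theorem negative_rhs_needs_full_support (d : ℕ) (hd : 1 ≤ d)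
    (p : Fin d → ℕ) (hmono : StrictMono p) (hprime : ∀ i, (p i).Prime)
    (b : ℤ) (hneg : b < 0)
    (hmod : b ≡ 1 [ZMOD ((∏ i, p i : ℕ) : ℤ)]) :
    (∃ (x : Fin d → ℕ) (y : ℕ),
        b = ∑ i, (x i : ℤ) * (∏ j ∈ Finset.univ.erase i, p j : ℕ) -
          (y : ℤ) * ((∏ i, p i : ℕ) : ℤ)) ∧
      ∀ (x : Fin d → ℕ) (y : ℕ),
        b = ∑ i, (x i : ℤ) * (∏ j ∈ Finset.univ.erase i, p j : ℕ) -
          (y : ℤ) * ((∏ i, p i : ℕ) : ℤ) →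
        (∀ i, 1 ≤ x i) ∧ 1 ≤ y := by
  have hinj := hmono.injective
  set δ : ℕ := ∏ i, p i with hδ
  set q : Fin d → ℕ := fun i => ∏ j ∈ Finset.univ.erase i, p j with hqdef
  have hpq : ∀ i, p i * q i = δ := fun i => Finset.mul_prod_erase _ _ (mem_univ i)
  have hdvdq : ∀ i j, i ≠ j → p i ∣ q j := fun i j hij =>
    Finset.dvd_prod_of_mem _ (Finset.mem_erase.2 ⟨hij, mem_univ i⟩)
  have hpdvdδ : ∀ i, p i ∣ δ := fun i => ⟨q i, (hpq i).symm⟩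
  have hqne : ∀ i, ¬ (p i ∣ q i) := by
    intro i h
    obtain ⟨j, hj, hdvd⟩ := (Nat.Prime.prime (hprime i)).exists_mem_finset_dvd h
    have := ((Nat.prime_dvd_prime_iff_eq (hprime i) (hprime j)).1 hdvd)
    exact (Finset.mem_erase.1 hj).1 (hinj this.symm)
  haveI : ∀ i, Fact (p i).Prime := fun i => ⟨hprime i⟩
  have hbmod : ∀ i, ((b : ZMod (p i)) = 1) := by
    intro i
    have h1 : ((p i : ℤ)) ∣ 1 - b :=
      dvd_trans (Int.natCast_dvd_natCast.2 (hpdvdδ i)) hmod.dvd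
    have := (ZMod.intCast_zmod_eq_zero_iff_dvd (1 - b) (p i)).2 h1
    push_cast at this
    linear_combination -this
  -- M ≡ 1 mod each p i
  set M : ℕ := ∑ i, (q i) ^ (p i - 1) with hM
  have hMmod : ∀ i, ((M : ZMod (p i)) = 1) := by
    intro i
    rw [hM]
    push_cast
    rw [Finset.sum_eq_single i]
    · exact ZMod.pow_card_sub_one_eq_one (by
        rw [Ne, ZMod.natCast_eq_zero_iff]
        exact hqne i)
    · intro j _ hji
      rw [(ZMod.natCast_eq_zero_iff _ _).2 (hdvdq i j (Ne.symm hji)),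
        zero_pow]
      exact Nat.sub_ne_zero_of_lt (hprime j).one_lt
    · intro h; exact absurd (mem_univ i) h
  constructor
  · -- existence
    have hdvdi : ∀ i, (p i : ℤ) ∣ (M : ℤ) - b := by
      intro i
      rw [← ZMod.intCast_zmod_eq_zero_iff_dvd]
      push_cast
      rw [hMmod i, hbmod i]
      ring
    have hnonneg : (0:ℤ) ≤ (M:ℤ) - b := by
      have : (0:ℤ) ≤ (M:ℤ) := Int.natCast_nonneg M
      linarith
    set n : ℕ := ((M:ℤ) - b).toNat with hn
    have hncast : (n : ℤ) = (M:ℤ) - b := Int.toNat_of_nonneg hnonneg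
    have hdvdn : ∀ i, p i ∣ n := by
      intro i
      rw [← Int.natCast_dvd_natCast, hncast]
      exact hdvdi i
    have hδn : δ ∣ n := by
      have := Finset.prod_primes_dvd (s := Finset.univ.image p) n
        (fun r hr => by
          obtain ⟨i, _, rfl⟩ := Finset.mem_image.1 hr
          exact (hprime i).prime)
        (fun r hr => by
          obtain ⟨i, _, rfl⟩ := Finset.mem_image.1 hr
          exact hdvdn i)
      rwa [Finset.prod_image (fun i _ j _ h => hinj h)] at this
    refine ⟨fun i => (q i) ^ (p i - 2), n / δ, ?_⟩
    have hy : (δ : ℤ) * ((n / δ : ℕ) : ℤ) = (n : ℤ) := by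
      rw [← Nat.cast_mul, Nat.mul_div_cancel' hδn]
    have hsum : ∑ i, ((q i ^ (p i - 2) : ℕ) : ℤ) * ((q i : ℕ) : ℤ) = (M : ℤ) := by
      rw [hM]
      push_cast
      refine Finset.sum_congr rfl fun i _ => ?_
      rw [← pow_succ]
      congr 1
      have := (hprime i).two_le
      omega
    rw [hsum]
    have : ((n / δ : ℕ) : ℤ) * (δ : ℤ) = (n : ℤ) := by linarith [hy]
    linarith [hncast, this]
  · -- necessity
    intro x y heq
    constructor
    · intro i
      by_contra h
      have hxi : x i = 0 := by omega
      -- reduce mod p i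
      have hb0 : (b : ZMod (p i)) = 0 := by
        have : ((∑ j, (x j : ℤ) * ((q j : ℕ) : ℤ) - (y : ℤ) * (δ : ℤ) : ℤ) : ZMod (p i)) = 0 := by
          push_cast
          rw [Finset.sum_eq_zero, (ZMod.natCast_eq_zero_iff _ _).2 (hpdvdδ i)]
          · ring
          · intro j _
            by_cases hji : j = i
            · subst hji; rw [hxi]; push_cast; ring
            · rw [(ZMod.natCast_eq_zero_iff _ _).2 (hdvdq i j (Ne.symm hji))]
              ring
        rw [← this]
        exact congrArg _ heq
      rw [hbmod i] at hb0
      exact one_ne_zero hb0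
    · by_contra h
      have hy0 : y = 0 := by omega
      rw [hy0] at heq
      push_cast at heq
      have : (0:ℤ) ≤ b := by
        rw [heq]
        simp only [zero_mul, sub_zero]
        exact Finset.sum_nonneg fun i _ => by positivity
      linarith
end
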